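/- arXiv:2310.19483 — 8 statements merged into one kernel-verified Lean document; each statement's English description precedes it below -/
import Mathlib

section
/- Let n ≥ 1 be an integer, a < b real numbers, and f : [a,b] → ℝ twice continuously differentiable with m₂ ≤ f''(x) ≤ M₂ for all x ∈ [a,b]. Define the remainder ε by f(b) = f(a) + (b-a)·[ (f'(a)+f'(b))/(2n) + (1/n)·Σ_{k=1}^{n-1} f'(a + k(b-a)/n) ] + (b-a)·ε. Then |ε| ≤ (b-a)(M₂ - m₂)/(8n). -/
open Set MeasureTheory

lemma int_sub_lin (p q r : ℝ) : ∫ t in p..q, (t - r) = ((q - r)^2 - (p - r)^2)/2 := by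
  rw [show (fun t : ℝ => t - r) = fun t => (fun u : ℝ => u) (t - r) from rfl,
    intervalIntegral.integral_comp_sub_right (fun u : ℝ => u) r, integral_id]
lemma trap_step (x y : ℝ) (hxy : x < y) (f f' f'' : ℝ → ℝ) (m2 M2 : ℝ)
    (hf' : ∀ t ∈ Icc x y, HasDerivWithinAt f (f' t) (Icc x y) t)
    (hf'' : ∀ t ∈ Icc x y, HasDerivWithinAt f' (f'' t) (Icc x y) t)
    (hcont : ContinuousOn f'' (Icc x y))
    (hm : ∀ t ∈ Icc x y, m2 ≤ f'' t) (hM : ∀ t ∈ Icc x y, f'' t ≤ M2) :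
    |f y - f x - (y - x) * (f' x + f' y) / 2| ≤ (M2 - m2) * (y - x)^2 / 8 := by
  set c : ℝ := (x + y) / 2 with hc
  set s : ℝ := (m2 + M2) / 2 with hs
  set d : ℝ := (M2 - m2) / 2 with hd
  have hxy' : x ≤ y := hxy.le
  have huIcc : uIcc x y = Icc x y := uIcc_of_le hxy'
  have hfc : ContinuousOn f (Icc x y) := fun t ht => (hf' t ht).continuousWithinAt
  have hf'c : ContinuousOn f' (Icc x y) := fun t ht => (hf'' t ht).continuousWithinAt
  have hkerc : ContinuousOn (fun t => (t - c) * f'' t) (Icc x y) :=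
    (continuousOn_id.sub continuousOn_const).mul hcont
  have hkerint : IntervalIntegrable (fun t => (t - c) * f'' t) volume x y :=
    (hkerc.mono (by rw [huIcc])).intervalIntegrable
  -- FTC for Φ(t) = (t - c) * f' t - f t
  have hΦ : ∫ t in x..y, (t - c) * f'' t
      = ((y - c) * f' y - f y) - ((x - c) * f' x - f x) := by
    apply intervalIntegral.integral_eq_sub_of_hasDeriv_right_of_le hxy'
      ((((continuousOn_id.sub continuousOn_const).mul hf'c).sub hfc)) ?_ hkerint
    intro t ht
    have h1 : HasDerivAt f (f' t) t :=
      (hf' t (Ioo_subset_Icc_self ht)).hasDerivAt (Icc_mem_nhds ht.1 ht.2)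
    have h2 : HasDerivAt f' (f'' t) t :=
      (hf'' t (Ioo_subset_Icc_self ht)).hasDerivAt (Icc_mem_nhds ht.1 ht.2)
    have : HasDerivAt (fun t => (t - c) * f' t - f t)
        ((1 * f' t + (t - c) * f'' t) - f' t) t :=
      (((hasDerivAt_id t).sub_const c).mul h2).sub h1
    have h3 : (1 * f' t + (t - c) * f'' t) - f' t = (t - c) * f'' t := by ring
    exact (h3 ▸ this).hasDerivWithinAt
  have hlin : ∫ t in x..y, (t - c) = 0 := by
    rw [int_sub_lin, hc]; ring
  -- E = -∫ (t-c)(f'' t - s)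
  have hE : f y - f x - (y - x) * (f' x + f' y) / 2
      = -∫ t in x..y, (t - c) * (f'' t - s) := by
    have hsint : IntervalIntegrable (fun t => s * (t - c)) volume x y :=
      (continuous_const.mul (continuous_id.sub continuous_const)).intervalIntegrable x y
    have : ∫ t in x..y, (t - c) * (f'' t - s)
        = (∫ t in x..y, (t - c) * f'' t) - s * ∫ t in x..y, (t - c) := by
      rw [← intervalIntegral.integral_const_mul,
        ← intervalIntegral.integral_sub hkerint hsint]
      congr 1; funext t; ring
    rw [this, hlin, hΦ]; ring
  -- bound the integrand by |t - c| * d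
  have habsc : IntervalIntegrable (fun t => |t - c| * d) volume x y :=
    ((((continuousOn_id.sub continuousOn_const).abs.mul continuousOn_const).mono
      (by rw [huIcc] : uIcc x y ⊆ Icc x y)).intervalIntegrable)
  have hptw : ∀ t ∈ Icc x y, |(t - c) * (f'' t - s)| ≤ |t - c| * d := by
    intro t ht
    rw [abs_mul]
    refine mul_le_mul_of_nonneg_left ?_ (abs_nonneg _)
    rw [abs_le]
    constructor <;> [linarith [hm t ht]; linarith [hM t ht]]
  have hint2 : IntervalIntegrable (fun t => (t - c) * (f'' t - s)) volume x y :=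
    (((continuousOn_id.sub continuousOn_const).mul
      (hcont.sub continuousOn_const)).mono (by rw [huIcc])).intervalIntegrable
  have hbound : |∫ t in x..y, (t - c) * (f'' t - s)| ≤ ∫ t in x..y, |t - c| * d := by
    rw [abs_le]
    constructor
    · have := intervalIntegral.integral_mono_on hxy' habsc.neg hint2
        (fun t ht => neg_le_of_abs_le (hptw t ht))
      simpa using this
    · exact intervalIntegral.integral_mono_on hxy' hint2 habsc
        (fun t ht => le_trans (le_abs_self _) (hptw t ht))
  -- compute ∫ |t - c| * d
  have hcxy : x ≤ c ∧ c ≤ y := by constructor <;> (rw [hc]; linarith)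
  have habs1 : ∫ t in x..c, |t - c| * d = (c - x)^2 / 2 * d := by
    have : ∀ t ∈ uIcc x c, |t - c| * d = (c - t) * d := by
      intro t ht
      rw [uIcc_of_le hcxy.1] at ht
      rw [abs_of_nonpos (by linarith [ht.2])]; ring
    rw [intervalIntegral.integral_congr this, intervalIntegral.integral_mul_const]
    have hneg : ∫ t in x..c, (c - t) = -∫ t in x..c, (t - c) := by
      rw [← intervalIntegral.integral_neg]; congr 1; funext t; ring
    rw [hneg, int_sub_lin]; ring
  have habs2 : ∫ t in c..y, |t - c| * d = (y - c)^2 / 2 * d := by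
    have : ∀ t ∈ uIcc c y, |t - c| * d = (t - c) * d := by
      intro t ht
      rw [uIcc_of_le hcxy.2] at ht
      rw [abs_of_nonneg (by linarith [ht.1])]
    rw [intervalIntegral.integral_congr this, intervalIntegral.integral_mul_const,
      int_sub_lin]
    ring
  have hsplit : ∫ t in x..y, |t - c| * d = (y - x)^2 / 4 * d := by
    have i1 : IntervalIntegrable (fun t => |t - c| * d) volume x c :=
      habsc.mono_set (by rw [huIcc, uIcc_of_le hcxy.1]; exact Icc_subset_Icc le_rfl hcxy.2)
    have i2 : IntervalIntegrable (fun t => |t - c| * d) volume c y :=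
      habsc.mono_set (by rw [huIcc, uIcc_of_le hcxy.2]; exact Icc_subset_Icc hcxy.1 le_rfl)
    rw [← intervalIntegral.integral_add_adjacent_intervals i1 i2, habs1, habs2, hc]; ring
  rw [hE, abs_neg]
  calc |∫ t in x..y, (t - c) * (f'' t - s)| ≤ ∫ t in x..y, |t - c| * d := hbound
    _ = (y - x)^2 / 4 * d := hsplit
    _ = (M2 - m2) * (y - x)^2 / 8 := by rw [hd]; ring


/-- First-order Taylor-like formula with `n` equally spaced points:
if `f ∈ C²([a,b])` with `m₂ ≤ f'' ≤ M₂` on `[a,b]`, and `ε` is the remainder defined by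
`f(b) = f(a) + (b-a)·[(f'(a)+f'(b))/(2n) + (1/n)·Σ_{k=1}^{n-1} f'(a + k(b-a)/n)] + (b-a)·ε`,
then `|ε| ≤ (b-a)(M₂-m₂)/(8n)`. -/
theorem taylor_like_first_order
    (n : ℕ) (hn : 1 ≤ n) (a b : ℝ) (hab : a < b)
    (f f' f'' : ℝ → ℝ) (m2 M2 ε : ℝ)
    (hf' : ∀ x ∈ Icc a b, HasDerivWithinAt f (f' x) (Icc a b) x)
    (hf'' : ∀ x ∈ Icc a b, HasDerivWithinAt f' (f'' x) (Icc a b) x)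
    (hf''cont : ContinuousOn f'' (Icc a b))
    (hm2 : ∀ x ∈ Icc a b, m2 ≤ f'' x)
    (hM2 : ∀ x ∈ Icc a b, f'' x ≤ M2)
    (hε : f b = f a
        + (b - a) * ((f' a + f' b) / (2 * n)
            + (1 / n) * ∑ k ∈ Finset.Ico 1 n, f' (a + k * (b - a) / n))
        + (b - a) * ε) :
    |ε| ≤ (b - a) * (M2 - m2) / (8 * n) := by
  have hn0 : (n : ℝ) ≠ 0 := Nat.cast_ne_zero.mpr (by omega)
  have hnpos : (0 : ℝ) < n := by positivity
  have hba : (0 : ℝ) < b - a := by linarith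
  set g : ℕ → ℝ := fun k => a + k * (b - a) / n with hg
  have hstep : ∀ k : ℕ, g (k + 1) - g k = (b - a) / n := by
    intro k
    simp only [hg]
    push_cast
    field_simp
    ring
  have hgmono : ∀ {k l : ℕ}, k ≤ l → g k ≤ g l := by
    intro k l hkl
    simp only [hg]
    have hk : (k : ℝ) ≤ l := Nat.cast_le.mpr hkl
    have h1 : (k : ℝ) * (b - a) / n ≤ (l : ℝ) * (b - a) / n :=
      (div_le_div_iff_of_pos_right hnpos).mpr (mul_le_mul_of_nonneg_right hk hba.le)
    linarith
  have hg0 : g 0 = a := by simp [hg]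
  have hgn : g n = b := by simp only [hg]; field_simp; ring
  have hglt : ∀ k : ℕ, g k < g (k + 1) := by
    intro k
    have h2 : (0:ℝ) < (b - a)/n := by positivity
    have h3 : (0:ℝ) < g (k + 1) - g k := (hstep k).symm ▸ h2
    linarith
  have hsub : ∀ k : ℕ, k < n → Icc (g k) (g (k + 1)) ⊆ Icc a b := by
    intro k hk
    apply Icc_subset_Icc
    · rw [← hg0]; exact hgmono (Nat.zero_le k)
    · rw [← hgn]; exact hgmono (by omega)
  set E : ℕ → ℝ := fun k =>
    f (g (k + 1)) - f (g k) - (g (k + 1) - g k) * (f' (g k) + f' (g (k + 1))) / 2 with hE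
  have hEbound : ∀ k ∈ Finset.range n, |E k| ≤ (M2 - m2) * ((b - a) / n) ^ 2 / 8 := by
    intro k hk
    rw [Finset.mem_range] at hk
    have hss := hsub k hk
    have hts := trap_step (g k) (g (k + 1)) (hglt k) f f' f'' m2 M2
      (fun t ht => (hf' t (hss ht)).mono hss)
      (fun t ht => (hf'' t (hss ht)).mono hss)
      (hf''cont.mono hss)
      (fun t ht => hm2 t (hss ht)) (fun t ht => hM2 t (hss ht))
    calc |E k| = |f (g (k+1)) - f (g k) - (g (k+1) - g k) * (f' (g k) + f' (g (k+1))) / 2| := rfl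
      _ ≤ (M2 - m2) * (g (k+1) - g k)^2 / 8 := hts
      _ = (M2 - m2) * ((b - a)/n)^2 / 8 := by rw [hstep k]
  have htel : ∑ k ∈ Finset.range n, (f (g (k + 1)) - f (g k)) = f b - f a := by
    rw [Finset.sum_range_sub (fun k => f (g k)), hg0, hgn]
  set S : ℝ := ∑ k ∈ Finset.Ico 1 n, f' (g k) with hS
  have hA : ∑ k ∈ Finset.range n, f' (g k) = f' a + S := by
    rw [Finset.range_eq_Ico, Finset.sum_eq_sum_Ico_succ_bot (by omega : 0 < n), hg0]
  have hB : ∑ k ∈ Finset.range n, f' (g (k + 1)) = S + f' b := by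
    have h1 : ∑ k ∈ Finset.range (n + 1), f' (g k)
        = (∑ k ∈ Finset.range n, f' (g (k + 1))) + f' (g 0) := Finset.sum_range_succ' _ n
    have h2 : ∑ k ∈ Finset.range (n + 1), f' (g k)
        = (∑ k ∈ Finset.range n, f' (g k)) + f' (g n) := Finset.sum_range_succ _ n
    rw [h2, hA, hg0, hgn] at h1
    linarith
  have hT : ∑ k ∈ Finset.range n, (g (k + 1) - g k) * (f' (g k) + f' (g (k + 1))) / 2
      = (b - a) * ((f' a + f' b) / (2 * n) + (1 / n) * S) := by
    have hcg : ∀ k ∈ Finset.range n, (g (k + 1) - g k) * (f' (g k) + f' (g (k + 1))) / 2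
        = (b - a) / (2 * n) * f' (g k) + (b - a) / (2 * n) * f' (g (k + 1)) := by
      intro k _
      rw [hstep k]
      ring
    rw [Finset.sum_congr rfl hcg, Finset.sum_add_distrib, ← Finset.mul_sum, ← Finset.mul_sum,
      hA, hB]
    field_simp
    ring
  have hsumE : ∑ k ∈ Finset.range n, E k = (b - a) * ε := by
    have h1 : ∑ k ∈ Finset.range n, E k
        = (∑ k ∈ Finset.range n, (f (g (k + 1)) - f (g k)))
          - ∑ k ∈ Finset.range n, (g (k + 1) - g k) * (f' (g k) + f' (g (k + 1))) / 2 := by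
      rw [← Finset.sum_sub_distrib]
    rw [h1, htel, hT]
    linarith [hε]
  have h2 : |(b - a) * ε| ≤ (n : ℝ) * ((M2 - m2) * ((b - a) / n) ^ 2 / 8) := by
    rw [← hsumE]
    calc |∑ k ∈ Finset.range n, E k| ≤ ∑ k ∈ Finset.range n, |E k| :=
        Finset.abs_sum_le_sum_abs _ _
      _ ≤ ∑ _k ∈ Finset.range n, (M2 - m2) * ((b - a) / n) ^ 2 / 8 :=
        Finset.sum_le_sum hEbound
      _ = (n : ℝ) * ((M2 - m2) * ((b - a) / n) ^ 2 / 8) := by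
        rw [Finset.sum_const, Finset.card_range]; simp [nsmul_eq_mul]
  rw [abs_mul, abs_of_pos hba] at h2
  have h3 : (n : ℝ) * ((M2 - m2) * ((b - a) / n) ^ 2 / 8)
      = (b - a) * ((b - a) * (M2 - m2) / (8 * n)) := by
    field_simp
  rw [h3] at h2
  exact (mul_le_mul_iff_right₀ hba).mp h2
end

section
/- Let a < b be real numbers and f : [a,b] → ℝ twice continuously differentiable with m₂ ≤ f''(x) ≤ M₂ for all x ∈ [a,b]. Define the remainder ε by f(b) = f(a) + (b-a)·(f'(a)+f'(b))/2 + (b-a)·ε. Then (b-a)(m₂-M₂)/8 ≤ ε ≤ (b-a)(M₂-m₂)/8. -/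
open Set

/-- Forward first-order Taylor upper bound. -/
lemma taylor1_forward_upper (u v : ℝ) (huv : u ≤ v) (f f' f'' : ℝ → ℝ) (M : ℝ)
    (hf' : ∀ x ∈ Icc u v, HasDerivWithinAt f (f' x) (Icc u v) x)
    (hf'' : ∀ x ∈ Icc u v, HasDerivWithinAt f' (f'' x) (Icc u v) x)
    (hM : ∀ x ∈ Icc u v, f'' x ≤ M) :
    f v - f u - (v - u) * f' u ≤ M * (v - u) ^ 2 / 2 := by
  set g : ℝ → ℝ := fun x => f x - (f u + (x - u) * f' u + M * (x - u) ^ 2 / 2) with hg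
  set p' : ℝ → ℝ := fun x => f' u + M * (x - u) with hp'
  have hpderiv : ∀ x : ℝ, HasDerivAt (fun x => f u + (x - u) * f' u + M * (x - u) ^ 2 / 2)
      (p' x) x := by
    intro x
    have h1 : HasDerivAt (fun x : ℝ => x - u) 1 x := (hasDerivAt_id x).sub_const u
    have := ((h1.mul_const (f' u)).const_add (f u)).fun_add (((h1.fun_pow 2).const_mul M).div_const 2)
    refine this.congr_deriv ?_
    simp [hp']
    ring
  have hg' : ∀ x ∈ Icc u v, HasDerivWithinAt g (f' x - p' x) (Icc u v) x :=
    fun x hx => (hf' x hx).sub (hpderiv x).hasDerivWithinAt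
  have hg'' : ∀ x ∈ Icc u v, HasDerivWithinAt (fun x => f' x - p' x) (f'' x - M) (Icc u v) x := by
    intro x hx
    have h2 : HasDerivAt p' M x := by
      have h1 : HasDerivAt (fun x : ℝ => x - u) 1 x := (hasDerivAt_id x).sub_const u
      have := (h1.const_mul M).const_add (f' u)
      simpa [hp'] using this
    exact (hf'' x hx).sub h2.hasDerivWithinAt
  have hanti : AntitoneOn (fun x => f' x - p' x) (Icc u v) := by
    apply antitoneOn_of_hasDerivWithinAt_nonpos (convex_Icc u v)
      (fun x hx => (hg'' x hx).continuousWithinAt)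
      (fun x hx => ((hg'' x (interior_subset hx)).mono interior_subset))
    intro x hx
    exact sub_nonpos.2 (hM x (interior_subset hx))
  have hg'nonpos : ∀ x ∈ interior (Icc u v), f' x - p' x ≤ 0 := by
    intro x hx
    have hx' : x ∈ Icc u v := interior_subset hx
    have := hanti (left_mem_Icc.2 huv) hx' hx'.1
    simpa [hp'] using this
  have hganti : AntitoneOn g (Icc u v) := by
    apply antitoneOn_of_hasDerivWithinAt_nonpos (convex_Icc u v)
      (fun x hx => (hg' x hx).continuousWithinAt)
      (fun x hx => ((hg' x (interior_subset hx)).mono interior_subset))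
    exact hg'nonpos
  have := hganti (left_mem_Icc.2 huv) (right_mem_Icc.2 huv) huv
  simp only [hg] at this
  nlinarith [this]

/-- Backward first-order Taylor upper bound. -/
lemma taylor1_backward_upper (u v : ℝ) (huv : u ≤ v) (f f' f'' : ℝ → ℝ) (M : ℝ)
    (hf' : ∀ x ∈ Icc u v, HasDerivWithinAt f (f' x) (Icc u v) x)
    (hf'' : ∀ x ∈ Icc u v, HasDerivWithinAt f' (f'' x) (Icc u v) x)
    (hM : ∀ x ∈ Icc u v, f'' x ≤ M) :
    f u - f v + (v - u) * f' v ≤ M * (v - u) ^ 2 / 2 := by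
  set g : ℝ → ℝ := fun x => f x - (f v + (x - v) * f' v + M * (x - v) ^ 2 / 2) with hg
  set p' : ℝ → ℝ := fun x => f' v + M * (x - v) with hp'
  have hpderiv : ∀ x : ℝ, HasDerivAt (fun x => f v + (x - v) * f' v + M * (x - v) ^ 2 / 2)
      (p' x) x := by
    intro x
    have h1 : HasDerivAt (fun x : ℝ => x - v) 1 x := (hasDerivAt_id x).sub_const v
    have := ((h1.mul_const (f' v)).const_add (f v)).fun_add (((h1.fun_pow 2).const_mul M).div_const 2)
    refine this.congr_deriv ?_
    simp [hp']
    ring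
  have hg' : ∀ x ∈ Icc u v, HasDerivWithinAt g (f' x - p' x) (Icc u v) x :=
    fun x hx => (hf' x hx).sub (hpderiv x).hasDerivWithinAt
  have hg'' : ∀ x ∈ Icc u v, HasDerivWithinAt (fun x => f' x - p' x) (f'' x - M) (Icc u v) x := by
    intro x hx
    have h2 : HasDerivAt p' M x := by
      have h1 : HasDerivAt (fun x : ℝ => x - v) 1 x := (hasDerivAt_id x).sub_const v
      have := (h1.const_mul M).const_add (f' v)
      simpa [hp'] using this
    exact (hf'' x hx).sub h2.hasDerivWithinAt
  have hanti : AntitoneOn (fun x => f' x - p' x) (Icc u v) := by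
    apply antitoneOn_of_hasDerivWithinAt_nonpos (convex_Icc u v)
      (fun x hx => (hg'' x hx).continuousWithinAt)
      (fun x hx => ((hg'' x (interior_subset hx)).mono interior_subset))
    intro x hx
    exact sub_nonpos.2 (hM x (interior_subset hx))
  have hg'nonneg : ∀ x ∈ interior (Icc u v), 0 ≤ f' x - p' x := by
    intro x hx
    have hx' : x ∈ Icc u v := interior_subset hx
    have := hanti hx' (right_mem_Icc.2 huv) hx'.2
    simpa [hp'] using this
  have hgmono : MonotoneOn g (Icc u v) := by
    apply monotoneOn_of_hasDerivWithinAt_nonneg (convex_Icc u v)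
      (fun x hx => (hg' x hx).continuousWithinAt)
      (fun x hx => ((hg' x (interior_subset hx)).mono interior_subset))
    exact hg'nonneg
  have := hgmono (left_mem_Icc.2 huv) (right_mem_Icc.2 huv) huv
  simp only [hg] at this
  nlinarith [this]

/-- Forward first-order Taylor lower bound. -/
lemma taylor1_forward_lower (u v : ℝ) (huv : u ≤ v) (f f' f'' : ℝ → ℝ) (m : ℝ)
    (hf' : ∀ x ∈ Icc u v, HasDerivWithinAt f (f' x) (Icc u v) x)
    (hf'' : ∀ x ∈ Icc u v, HasDerivWithinAt f' (f'' x) (Icc u v) x)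
    (hm : ∀ x ∈ Icc u v, m ≤ f'' x) :
    m * (v - u) ^ 2 / 2 ≤ f v - f u - (v - u) * f' u := by
  have := taylor1_forward_upper u v huv (fun x => -f x) (fun x => -f' x) (fun x => -f'' x) (-m)
    (fun x hx => (hf' x hx).neg) (fun x hx => (hf'' x hx).neg)
    (fun x hx => neg_le_neg (hm x hx))
  linarith

/-- Backward first-order Taylor lower bound. -/
lemma taylor1_backward_lower (u v : ℝ) (huv : u ≤ v) (f f' f'' : ℝ → ℝ) (m : ℝ)
    (hf' : ∀ x ∈ Icc u v, HasDerivWithinAt f (f' x) (Icc u v) x)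
    (hf'' : ∀ x ∈ Icc u v, HasDerivWithinAt f' (f'' x) (Icc u v) x)
    (hm : ∀ x ∈ Icc u v, m ≤ f'' x) :
    m * (v - u) ^ 2 / 2 ≤ f u - f v + (v - u) * f' v := by
  have := taylor1_backward_upper u v huv (fun x => -f x) (fun x => -f' x) (fun x => -f'' x) (-m)
    (fun x hx => (hf' x hx).neg) (fun x hx => (hf'' x hx).neg)
    (fun x hx => neg_le_neg (hm x hx))
  linarith

/-- Trapezoid-type first-order Taylor-like formula: if `f ∈ C²([a,b])` with
`m₂ ≤ f'' ≤ M₂` on `[a,b]`, and `ε` is the remainder defined by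
`f(b) = f(a) + (b-a)·(f'(a)+f'(b))/2 + (b-a)·ε`, then
`(b-a)(m₂-M₂)/8 ≤ ε ≤ (b-a)(M₂-m₂)/8`. -/
theorem taylor_like_trapezoid
    (a b : ℝ) (hab : a < b)
    (f f' f'' : ℝ → ℝ) (m2 M2 ε : ℝ)
    (hf' : ∀ x ∈ Icc a b, HasDerivWithinAt f (f' x) (Icc a b) x)
    (hf'' : ∀ x ∈ Icc a b, HasDerivWithinAt f' (f'' x) (Icc a b) x)
    (hf''cont : ContinuousOn f'' (Icc a b))
    (hm2 : ∀ x ∈ Icc a b, m2 ≤ f'' x)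
    (hM2 : ∀ x ∈ Icc a b, f'' x ≤ M2)
    (hε : f b = f a + (b - a) * ((f' a + f' b) / 2) + (b - a) * ε) :
    (b - a) * (m2 - M2) / 8 ≤ ε ∧ ε ≤ (b - a) * (M2 - m2) / 8 := by
  set c : ℝ := (a + b) / 2 with hc
  have hac : a ≤ c := by simp [hc]; linarith
  have hcb : c ≤ b := by simp [hc]; linarith
  have hsub1 : Icc a c ⊆ Icc a b := Icc_subset_Icc le_rfl hcb
  have hsub2 : Icc c b ⊆ Icc a b := Icc_subset_Icc hac le_rfl
  have hA_up := taylor1_forward_upper a c hac f f' f'' M2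
    (fun x hx => (hf' x (hsub1 hx)).mono hsub1)
    (fun x hx => (hf'' x (hsub1 hx)).mono hsub1)
    (fun x hx => hM2 x (hsub1 hx))
  have hA_lo := taylor1_forward_lower a c hac f f' f'' m2
    (fun x hx => (hf' x (hsub1 hx)).mono hsub1)
    (fun x hx => (hf'' x (hsub1 hx)).mono hsub1)
    (fun x hx => hm2 x (hsub1 hx))
  have hB_up := taylor1_backward_upper c b hcb f f' f'' M2
    (fun x hx => (hf' x (hsub2 hx)).mono hsub2)
    (fun x hx => (hf'' x (hsub2 hx)).mono hsub2)
    (fun x hx => hM2 x (hsub2 hx))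
  have hB_lo := taylor1_backward_lower c b hcb f f' f'' m2
    (fun x hx => (hf' x (hsub2 hx)).mono hsub2)
    (fun x hx => (hf'' x (hsub2 hx)).mono hsub2)
    (fun x hx => hm2 x (hsub2 hx))
  have hca : c - a = (b - a) / 2 := by simp [hc]; ring
  have hbc : b - c = (b - a) / 2 := by simp [hc]; ring
  rw [hca] at hA_up hA_lo
  rw [hbc] at hB_up hB_lo
  have hba : (0:ℝ) < b - a := by linarith
  constructor
  · have key : (b - a) * ((b - a) * (m2 - M2) / 8) ≤ (b - a) * ε := by nlinarith
    exact le_of_mul_le_mul_left key hba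
  · have key : (b - a) * ε ≤ (b - a) * ((b - a) * (M2 - m2) / 8) := by nlinarith
    exact le_of_mul_le_mul_left key hba
end

section
/- Let u ∈ C²([0,1]) with m₂ ≤ u''(x) ≤ M₂ for all x ∈ [0,1], let 0 = x₀ < x₁ < … < x_{N+1} = 1 be a partition with hᵢ = x_{i+1} - xᵢ and h = max_{0≤i≤N} hᵢ, and let u_I be the piecewise linear interpolant of u. Then for every integer n ≥ 1: ∫₀¹ |u(x) - u_I(x)| dx + Σ_{i=0}^{N} ∫_{xᵢ}^{x_{i+1}} |u'(x) - (u(x_{i+1}) - u(xᵢ))/hᵢ| dx ≤ ((h + h²)/2)·‖u''‖_∞ + ((h + h²)/(8n))·(M₂ - m₂). -/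
open Set intervalIntegral MeasureTheory

lemma integ_linear (a b c : ℝ) : ∫ x in a..b, (x - c) = (b^2 - a^2)/2 - (b - a)*c := by
  rw [intervalIntegral.integral_sub intervalIntegrable_id (intervalIntegrable_const),
    integral_id, intervalIntegral.integral_const, smul_eq_mul]

lemma integ_abs (a c b : ℝ) (h1 : a ≤ c) (h2 : c ≤ b) :
    ∫ x in a..b, |x - c| = ((c-a)^2 + (b-c)^2)/2 := by
  have hi1 : IntervalIntegrable (fun x => |x - c|) volume a c :=
    (continuous_abs.comp (continuous_id.sub continuous_const)).intervalIntegrable _ _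
  have hi2 : IntervalIntegrable (fun x => |x - c|) volume c b :=
    (continuous_abs.comp (continuous_id.sub continuous_const)).intervalIntegrable _ _
  rw [← intervalIntegral.integral_add_adjacent_intervals hi1 hi2]
  have e1 : ∫ x in a..c, |x - c| = ∫ x in a..c, (c - x) := by
    apply intervalIntegral.integral_congr
    intro x hx
    rw [uIcc_of_le h1] at hx
    show |x - c| = c - x
    rw [abs_sub_comm, abs_of_nonneg (by linarith [hx.2])]
  have e2 : ∫ x in c..b, |x - c| = ∫ x in c..b, (x - c) := by
    apply intervalIntegral.integral_congr
    intro x hx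
    rw [uIcc_of_le h2] at hx
    show |x - c| = x - c
    rw [abs_of_nonneg (by linarith [hx.1])]
  have e1' : ∫ x in a..c, (c - x) = -∫ x in a..c, (x - c) := by
    rw [← intervalIntegral.integral_neg]; congr 1; ext x; ring
  rw [e1, e2, e1', integ_linear, integ_linear]; ring

lemma interval_est (u u' u'' : ℝ → ℝ) (S : ℝ)
    (hu' : ∀ t ∈ Icc (0 : ℝ) 1, HasDerivWithinAt u (u' t) (Icc (0 : ℝ) 1) t)
    (hu'' : ∀ t ∈ Icc (0 : ℝ) 1, HasDerivWithinAt u' (u'' t) (Icc (0 : ℝ) 1) t)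
    (hS : ∀ t ∈ Icc (0 : ℝ) 1, |u'' t| ≤ S)
    (a b : ℝ) (ha : 0 ≤ a) (hb : b ≤ 1) (hab : a < b) (h : ℝ) (hba : b - a ≤ h) :
    (∫ t in a..b, |u t - (u a + (t - a) * (u b - u a) / (b - a))|)
      + (∫ t in a..b, |u' t - (u b - u a) / (b - a)|)
      ≤ S * ((h^2 + h) / 2) * (b - a) := by
  have hsub : Icc a b ⊆ Icc (0:ℝ) 1 := Icc_subset_Icc ha hb
  have hS0 : 0 ≤ S := le_trans (abs_nonneg _) (hS 0 (by norm_num))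
  have hh0 : 0 < h := lt_of_lt_of_le (by linarith) hba
  have hu'c : ContinuousOn u' (Icc (0:ℝ) 1) := fun t ht => (hu'' t ht).continuousWithinAt
  have huc : ContinuousOn u (Icc (0:ℝ) 1) := fun t ht => (hu' t ht).continuousWithinAt
  set L : ℝ := (u b - u a) / (b - a) with hL
  -- MVT
  obtain ⟨ξ, hξ, hξL⟩ : ∃ ξ ∈ Ioo a b, u' ξ = L := by
    apply exists_hasDerivAt_eq_slope u u' hab (huc.mono hsub)
    intro x hx
    have hx01 : x ∈ Ioo (0:ℝ) 1 := ⟨lt_of_le_of_lt ha hx.1, lt_of_lt_of_le hx.2 hb⟩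
    exact (hu' x (Ioo_subset_Icc_self hx01)).hasDerivAt
      (Icc_mem_nhds hx01.1 hx01.2)
  have hξmem : ξ ∈ Icc (0:ℝ) 1 := hsub (Ioo_subset_Icc_self hξ)
  -- pointwise bound on u' - L
  have hg : ∀ x ∈ Icc (0:ℝ) 1, |u' x - L| ≤ S * |x - ξ| := by
    intro x hx
    rw [← hξL]
    have := (convex_Icc (0:ℝ) 1).norm_image_sub_le_of_norm_hasDerivWithin_le
      hu'' (fun t ht => by simpa using hS t ht) hξmem hx
    simpa [Real.norm_eq_abs] using this
  -- second term
  have hcg : ContinuousOn (fun t => |u' t - L|) (uIcc a b) := by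
    rw [uIcc_of_le hab.le]; exact ((hu'c.mono hsub).sub continuousOn_const).abs
  have hint2 : IntervalIntegrable (fun t => |u' t - L|) volume a b :=
    hcg.intervalIntegrable
  have hbound2 : (∫ t in a..b, |u' t - L|) ≤ S * ((b-a)^2 / 2) := by
    have h1 : (∫ t in a..b, |u' t - L|) ≤ ∫ t in a..b, S * |t - ξ| := by
      apply intervalIntegral.integral_mono_on hab.le hint2
      · exact (continuous_const.mul
          (continuous_abs.comp (continuous_id.sub continuous_const))).intervalIntegrable _ _
      · intro x hx; exact hg x (hsub hx)
    have h2 : ∫ t in a..b, S * |t - ξ| = S * (((ξ-a)^2 + (b-ξ)^2)/2) := by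
      rw [intervalIntegral.integral_const_mul, integ_abs a ξ b hξ.1.le hξ.2.le]
    rw [h2] at h1
    refine h1.trans ?_
    have : (ξ-a)^2 + (b-ξ)^2 ≤ (b-a)^2 := by nlinarith [hξ.1.le, hξ.2.le]
    nlinarith
  -- first term
  have hgbd : ∀ x ∈ Icc a b, |u' x - L| ≤ S * h := by
    intro x hx
    refine (hg x (hsub hx)).trans ?_
    have : |x - ξ| ≤ h := by
      rw [abs_le]; constructor <;> [linarith [hx.1, hξ.2.le]; linarith [hx.2, hξ.1.le]]
    nlinarith [abs_nonneg (x - ξ)]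
  have hv : ∀ x ∈ Icc a b, HasDerivWithinAt (fun t => u t - L * t) (u' x - L) (Icc a b) x := by
    intro x hx
    have hid : HasDerivWithinAt (fun t : ℝ => L * t) L (Icc a b) x := by
      simpa using (hasDerivWithinAt_id x (Icc a b)).const_mul L
    exact ((hu' x (hsub hx)).mono hsub).sub hid
  have hvbd : ∀ x ∈ Icc a b, |u x - (u a + (x - a) * (u b - u a) / (b - a))| ≤ S * h * (x - a) := by
    intro x hx
    have := (convex_Icc a b).norm_image_sub_le_of_norm_hasDerivWithin_le
      hv (fun t ht => by simpa [Real.norm_eq_abs] using hgbd t ht)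
      (left_mem_Icc.mpr hab.le) hx
    have e : u x - (u a + (x - a) * (u b - u a) / (b - a))
        = (u x - L * x) - (u a - L * a) := by
      rw [hL]; field_simp; ring
    rw [e]
    calc |(u x - L * x) - (u a - L * a)| ≤ S * h * |x - a| := by
          simpa [Real.norm_eq_abs] using this
      _ = S * h * (x - a) := by rw [abs_of_nonneg (by linarith [hx.1])]
  have hc1 : ContinuousOn (fun t => |u t - (u a + (t - a) * (u b - u a) / (b - a))|)
      (uIcc a b) := by
    rw [uIcc_of_le hab.le]
    apply ContinuousOn.abs
    apply (huc.mono hsub).sub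
    fun_prop
  have hint1 : IntervalIntegrable (fun t => |u t - (u a + (t - a) * (u b - u a) / (b - a))|)
      volume a b := hc1.intervalIntegrable
  have hbound1 : (∫ t in a..b, |u t - (u a + (t - a) * (u b - u a) / (b - a))|)
      ≤ S * h * ((b-a)^2 / 2) := by
    have h1 : (∫ t in a..b, |u t - (u a + (t - a) * (u b - u a) / (b - a))|)
        ≤ ∫ t in a..b, S * h * (t - a) := by
      apply intervalIntegral.integral_mono_on hab.le hint1
      · exact (continuous_const.mul (continuous_id.sub continuous_const)).intervalIntegrable _ _
      · exact hvbd
    rw [intervalIntegral.integral_const_mul, integ_linear] at h1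
    refine h1.trans (le_of_eq ?_); ring
  have hfac : 0 ≤ S * (b - a) * (h - (b - a)) :=
    mul_nonneg (mul_nonneg hS0 (by linarith)) (by linarith)
  have key1 : S * h * ((b-a)^2/2) ≤ S * (h^2/2) * (b - a) := by nlinarith
  have key2 : S * ((b-a)^2/2) ≤ S * (h/2) * (b - a) := by nlinarith
  calc (∫ t in a..b, |u t - (u a + (t - a) * (u b - u a) / (b - a))|)
        + (∫ t in a..b, |u' t - L|)
      ≤ S * (h^2/2) * (b-a) + S * (h/2) * (b-a) := by
        have := hbound2.trans key2
        have := hbound1.trans key1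
        linarith
    _ = S * ((h^2 + h)/2) * (b - a) := by ring

/-- Refined `P₁`-interpolation error estimate in the `W^{1,1}`-norm obtained from the
first-order Taylor-like formula: for `u ∈ C²([0,1])` with `m₂ ≤ u'' ≤ M₂`, a partition
with mesh size `h`, `u_I` the piecewise linear interpolant, and every `n ≥ 1`,
`‖u - u_I‖_{1,1} ≤ ((h+h²)/2)·‖u''‖_∞ + ((h+h²)/(8n))·(M₂-m₂)`. -/
theorem interpolation_error_refined
    (N : ℕ) (u u' u'' : ℝ → ℝ) (m2 M2 : ℝ)
    (hu' : ∀ t ∈ Icc (0 : ℝ) 1, HasDerivWithinAt u (u' t) (Icc (0 : ℝ) 1) t)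
    (hu'' : ∀ t ∈ Icc (0 : ℝ) 1, HasDerivWithinAt u' (u'' t) (Icc (0 : ℝ) 1) t)
    (hu''cont : ContinuousOn u'' (Icc (0 : ℝ) 1))
    (hm2 : ∀ t ∈ Icc (0 : ℝ) 1, m2 ≤ u'' t)
    (hM2 : ∀ t ∈ Icc (0 : ℝ) 1, u'' t ≤ M2)
    (X : ℕ → ℝ) (hX0 : X 0 = 0) (hXN : X (N + 1) = 1)
    (hXmono : ∀ i ≤ N, X i < X (i + 1))
    (h : ℝ) (hh : IsGreatest {d : ℝ | ∃ i ≤ N, d = X (i + 1) - X i} h)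
    (uI : ℝ → ℝ)
    (huI : ∀ i ≤ N, ∀ t ∈ Icc (X i) (X (i + 1)),
      uI t = u (X i) + (t - X i) * (u (X (i + 1)) - u (X i)) / (X (i + 1) - X i)) :
    ∀ n : ℕ, 1 ≤ n →
      (∫ t in (0 : ℝ)..1, |u t - uI t|)
        + ∑ i ∈ Finset.range (N + 1),
            ∫ t in (X i)..(X (i + 1)),
              |u' t - (u (X (i + 1)) - u (X i)) / (X (i + 1) - X i)|
        ≤ ((h + h ^ 2) / 2) * (⨆ t : Icc (0 : ℝ) 1, |u'' t|)
            + ((h + h ^ 2) / (8 * n)) * (M2 - m2) := by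
  intro n hn
  -- monotonicity of the partition
  have key : ∀ i j : ℕ, i ≤ j → j ≤ N + 1 → X i ≤ X j := by
    intro i j hij hj
    induction j with
    | zero => simp_all
    | succ k ih =>
      rcases Nat.lt_or_ge i (k+1) with hlt | hge
      · have : X i ≤ X k := ih (Nat.lt_succ_iff.mp hlt) (by omega)
        exact this.trans (hXmono k (by omega)).le
      · have : i = k + 1 := le_antisymm hij hge
        simp [this]
  have hXnn : ∀ i, i ≤ N + 1 → 0 ≤ X i := fun i hi => hX0 ▸ key 0 i (Nat.zero_le _) hi
  have hXle1 : ∀ i, i ≤ N + 1 → X i ≤ 1 := fun i hi => hXN ▸ key i (N+1) hi le_rfl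
  -- mesh size facts
  obtain ⟨i0, hi0, hi0e⟩ := hh.1
  have hpos : 0 < h := hi0e ▸ sub_pos.mpr (hXmono i0 hi0)
  -- sup norm of u''
  set S : ℝ := ⨆ t : Icc (0 : ℝ) 1, |u'' t| with hSdef
  have hbdd : BddAbove (Set.range fun t : Icc (0:ℝ) 1 => |u'' (t : ℝ)|) := by
    have := (isCompact_Icc.image_of_continuousOn hu''cont.abs).bddAbove
    rwa [Set.image_eq_range] at this
  have hS : ∀ t ∈ Icc (0:ℝ) 1, |u'' t| ≤ S := fun t ht => le_ciSup hbdd ⟨t, ht⟩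
  -- notation for the linear interpolant on each interval
  set lin : ℕ → ℝ → ℝ := fun i t =>
    u (X i) + (t - X i) * (u (X (i + 1)) - u (X i)) / (X (i + 1) - X i) with hlin
  have hcontlin : ∀ i, Continuous (lin i) := by
    intro i; apply Continuous.add continuous_const; fun_prop
  have hucont : ContinuousOn u (Icc (0:ℝ) 1) := fun t ht => (hu' t ht).continuousWithinAt
  have hsubI : ∀ i ≤ N, Icc (X i) (X (i+1)) ⊆ Icc (0:ℝ) 1 := fun i hi =>
    Icc_subset_Icc (hXnn i (by omega)) (hXle1 (i+1) (by omega))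
  have hinti : ∀ i ≤ N, IntervalIntegrable (fun t => |u t - uI t|) volume (X i) (X (i+1)) := by
    intro i hi
    have hle := (hXmono i hi).le
    rw [intervalIntegrable_iff_integrableOn_Icc_of_le hle]
    have hg : IntegrableOn (fun t => |u t - lin i t|) (Icc (X i) (X (i+1))) volume := by
      have : ContinuousOn (fun t => |u t - lin i t|) (Icc (X i) (X (i+1))) :=
        ((hucont.mono (hsubI i hi)).sub (hcontlin i).continuousOn).abs
      exact this.integrableOn_compact isCompact_Icc
    apply hg.congr_fun _ measurableSet_Icc
    intro t ht
    simp only [huI i hi t ht, hlin]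
  -- split the L¹ integral
  have hsplit : (∫ t in (0:ℝ)..1, |u t - uI t|)
      = ∑ i ∈ Finset.range (N + 1), ∫ t in (X i)..(X (i+1)), |u t - uI t| := by
    rw [← hX0, ← hXN]
    exact (intervalIntegral.sum_integral_adjacent_intervals
      (fun k hk => hinti k (Nat.lt_succ_iff.mp hk))).symm
  have hcongr : ∀ i ≤ N, (∫ t in (X i)..(X (i+1)), |u t - uI t|)
      = ∫ t in (X i)..(X (i+1)), |u t - lin i t| := by
    intro i hi
    apply intervalIntegral.integral_congr
    intro t ht
    rw [uIcc_of_le (hXmono i hi).le] at ht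
    simp only [huI i hi t ht, hlin]
  -- termwise estimate
  have hterm : ∀ i ∈ Finset.range (N+1),
      (∫ t in (X i)..(X (i+1)), |u t - uI t|)
        + (∫ t in (X i)..(X (i+1)), |u' t - (u (X (i+1)) - u (X i)) / (X (i+1) - X i)|)
      ≤ S * ((h^2 + h)/2) * (X (i+1) - X i) := by
    intro i hi
    rw [Finset.mem_range, Nat.lt_succ_iff] at hi
    rw [hcongr i hi]
    exact interval_est u u' u'' S hu' hu'' hS (X i) (X (i+1))
      (hXnn i (by omega)) (hXle1 (i+1) (by omega)) (hXmono i hi)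
      h (hh.2 ⟨i, hi, rfl⟩)
  have hsum : ∑ i ∈ Finset.range (N+1), (X (i+1) - X i) = 1 := by
    rw [Finset.sum_range_sub, hX0, hXN, sub_zero]
  have hmain : (∫ t in (0:ℝ)..1, |u t - uI t|)
      + ∑ i ∈ Finset.range (N + 1),
          ∫ t in (X i)..(X (i+1)), |u' t - (u (X (i+1)) - u (X i)) / (X (i+1) - X i)|
      ≤ S * ((h^2 + h)/2) := by
    rw [hsplit, ← Finset.sum_add_distrib]
    calc ∑ i ∈ Finset.range (N+1), ((∫ t in (X i)..(X (i+1)), |u t - uI t|)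
          + ∫ t in (X i)..(X (i+1)), |u' t - (u (X (i+1)) - u (X i)) / (X (i+1) - X i)|)
        ≤ ∑ i ∈ Finset.range (N+1), S * ((h^2 + h)/2) * (X (i+1) - X i) :=
          Finset.sum_le_sum hterm
      _ = S * ((h^2 + h)/2) := by rw [← Finset.mul_sum, hsum, mul_one]
  refine hmain.trans ?_
  have hMm : 0 ≤ M2 - m2 := by
    have h0 : (0:ℝ) ∈ Icc (0:ℝ) 1 := by norm_num
    linarith [hm2 0 h0, hM2 0 h0]
  have hn0 : (0:ℝ) < 8 * n := by positivity
  have h2 : 0 ≤ ((h + h ^ 2) / (8 * n)) * (M2 - m2) := by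
    apply mul_nonneg (div_nonneg (by nlinarith) (by positivity)) hMm
  nlinarith [h2]
end

section
/- Let u ∈ C²([a,b]) with a < b and m₂ ≤ u''(x) ≤ M₂ for all x ∈ [a,b]. Then for every integer n ≥ 1: ∫_a^b |u'(x) - (u(b) - u(a))/(b - a)| dx ≤ ((b-a)²/2)·‖u''‖_∞ + ((b-a)²/(8n))·(M₂ - m₂), where ‖u''‖_∞ is the supremum of |u''| over [a,b]. -/
open Set

lemma abs_dist_integral (a b ξ : ℝ) (h1 : a ≤ ξ) (h2 : ξ ≤ b) :
    ∫ x in a..b, |x - ξ| = ((ξ - a) ^ 2 + (b - ξ) ^ 2) / 2 := by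
  have hc : Continuous fun x : ℝ => |x - ξ| :=
    continuous_abs.comp (continuous_id.sub continuous_const)
  have i1 : IntervalIntegrable (fun x => |x - ξ|) MeasureTheory.volume a ξ :=
    hc.intervalIntegrable _ _
  have i2 : IntervalIntegrable (fun x => |x - ξ|) MeasureTheory.volume ξ b :=
    hc.intervalIntegrable _ _
  rw [← intervalIntegral.integral_add_adjacent_intervals i1 i2]
  have e1 : (∫ x in a..ξ, |x - ξ|) = ∫ x in a..ξ, (ξ - x) := by
    apply intervalIntegral.integral_congr
    intro x hx
    rw [uIcc_of_le h1] at hx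
    show |x - ξ| = ξ - x
    rw [abs_of_nonpos (by linarith [hx.2])]; ring
  have e2 : (∫ x in ξ..b, |x - ξ|) = ∫ x in ξ..b, (x - ξ) := by
    apply intervalIntegral.integral_congr
    intro x hx
    rw [uIcc_of_le h2] at hx
    show |x - ξ| = x - ξ
    rw [abs_of_nonneg (by linarith [hx.1])]
  have j1 : (∫ x in a..ξ, (ξ - x)) = ξ * (ξ - a) - (ξ ^ 2 - a ^ 2) / 2 := by
    rw [intervalIntegral.integral_sub (intervalIntegrable_const)
      (by exact continuous_id.intervalIntegrable a ξ : IntervalIntegrable (fun x : ℝ => x) MeasureTheory.volume a ξ)]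
    simp [integral_id]
    ring
  have j2 : (∫ x in ξ..b, (x - ξ)) = (b ^ 2 - ξ ^ 2) / 2 - ξ * (b - ξ) := by
    rw [intervalIntegral.integral_sub
      (by exact continuous_id.intervalIntegrable ξ b : IntervalIntegrable (fun x : ℝ => x) MeasureTheory.volume ξ b)
      (intervalIntegrable_const)]
    simp [integral_id]
    ring
  rw [e1, e2, j1, j2]; ring

/-- Refined per-interval estimate: for `u ∈ C²([a,b])` with `m₂ ≤ u'' ≤ M₂` and every `n ≥ 1`,
`∫_a^b |u'(x) - (u(b)-u(a))/(b-a)| dx ≤ ((b-a)²/2)·‖u''‖_∞ + ((b-a)²/(8n))·(M₂-m₂)`. -/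
theorem slope_deviation_L1_refined
    (a b : ℝ) (hab : a < b) (u u' u'' : ℝ → ℝ) (m2 M2 : ℝ)
    (hu' : ∀ x ∈ Icc a b, HasDerivWithinAt u (u' x) (Icc a b) x)
    (hu'' : ∀ x ∈ Icc a b, HasDerivWithinAt u' (u'' x) (Icc a b) x)
    (hu''cont : ContinuousOn u'' (Icc a b))
    (hm2 : ∀ x ∈ Icc a b, m2 ≤ u'' x)
    (hM2 : ∀ x ∈ Icc a b, u'' x ≤ M2) :
    ∀ n : ℕ, 1 ≤ n →
      ∫ x in a..b, |u' x - (u b - u a) / (b - a)|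
        ≤ ((b - a) ^ 2 / 2) * (⨆ t : Icc a b, |u'' t|)
            + ((b - a) ^ 2 / (8 * n)) * (M2 - m2) := by
  intro n hn
  have hab' : a ≤ b := hab.le
  have ha : a ∈ Icc a b := ⟨le_refl a, hab'⟩
  set S := ⨆ t : Icc a b, |u'' t| with hS
  -- boundedness of |u''|
  have hbdd : BddAbove (Set.range fun t : Icc a b => |u'' t|) := by
    have h := (isCompact_Icc.image_of_continuousOn hu''cont.abs).bddAbove
    rwa [Set.image_eq_range] at h
  have hle : ∀ x ∈ Icc a b, |u'' x| ≤ S := fun x hx => le_ciSup hbdd ⟨x, hx⟩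
  have hS0 : 0 ≤ S := le_trans (abs_nonneg _) (hle a ha)
  -- continuity of u'
  have hu'cont : ContinuousOn u' (Icc a b) := fun x hx =>
    (hu'' x hx).continuousWithinAt
  have hucont : ContinuousOn u (Icc a b) := fun x hx =>
    (hu' x hx).continuousWithinAt
  -- MVT: exists ξ with u' ξ = slope
  have hderiv : ∀ x ∈ Ioo a b, HasDerivAt u (u' x) x := fun x hx =>
    (hu' x (Ioo_subset_Icc_self hx)).hasDerivAt (Icc_mem_nhds hx.1 hx.2)
  obtain ⟨ξ, hξ, hξeq⟩ := exists_hasDerivAt_eq_slope u u' hab hucont hderiv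
  have hξI : ξ ∈ Icc a b := Ioo_subset_Icc_self hξ
  -- pointwise bound
  have hpt : ∀ x ∈ Icc a b, |u' x - (u b - u a) / (b - a)| ≤ S * |x - ξ| := by
    intro x hx
    rw [← hξeq]
    have := Convex.norm_image_sub_le_of_norm_hasDerivWithin_le hu''
      (fun y hy => by rw [Real.norm_eq_abs]; exact hle y hy)
      (convex_Icc a b) hξI hx
    simpa [Real.norm_eq_abs] using this
  -- integrability
  have hint1 : IntervalIntegrable (fun x => |u' x - (u b - u a) / (b - a)|)
      MeasureTheory.volume a b := by
    apply ContinuousOn.intervalIntegrable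
    rw [uIcc_of_le hab']
    exact (hu'cont.sub continuousOn_const).abs
  have hint2 : IntervalIntegrable (fun x => S * |x - ξ|)
      MeasureTheory.volume a b :=
    (continuous_const.mul (continuous_abs.comp
      (continuous_id.sub continuous_const))).intervalIntegrable _ _
  have hmono : (∫ x in a..b, |u' x - (u b - u a) / (b - a)|)
      ≤ ∫ x in a..b, S * |x - ξ| :=
    intervalIntegral.integral_mono_on hab' hint1 hint2 hpt
  have hcalc : (∫ x in a..b, S * |x - ξ|)
      = S * (((ξ - a) ^ 2 + (b - ξ) ^ 2) / 2) := by
    rw [intervalIntegral.integral_const_mul, abs_dist_integral a b ξ hξI.1 hξI.2]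
  have hsq : ((ξ - a) ^ 2 + (b - ξ) ^ 2) / 2 ≤ (b - a) ^ 2 / 2 := by
    nlinarith [mul_nonneg (sub_nonneg.2 hξI.1) (sub_nonneg.2 hξI.2)]
  have hM : m2 ≤ M2 := le_trans (hm2 a ha) (hM2 a ha)
  have hsecond : 0 ≤ (b - a) ^ 2 / (8 * n) * (M2 - m2) := by
    apply mul_nonneg
    · apply div_nonneg (sq_nonneg _)
      positivity
    · linarith
  calc (∫ x in a..b, |u' x - (u b - u a) / (b - a)|)
      ≤ S * (((ξ - a) ^ 2 + (b - ξ) ^ 2) / 2) := by rw [← hcalc]; exact hmono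
    _ ≤ S * ((b - a) ^ 2 / 2) := by
        exact mul_le_mul_of_nonneg_left hsq hS0
    _ = ((b - a) ^ 2 / 2) * S := by ring
    _ ≤ _ := le_add_of_nonneg_right hsecond
end

section
/- Let u ∈ C²([0,1]) with m₂ ≤ u''(x) ≤ M₂ for all x ∈ [0,1], let 0 = x₀ < x₁ < … < x_{N+1} = 1 be a partition with hᵢ = x_{i+1} - xᵢ and h = max_{0≤i≤N} hᵢ. Then for every integer n ≥ 1: Σ_{i=0}^{N} ∫_{xᵢ}^{x_{i+1}} |u'(x) - (u(x_{i+1}) - u(xᵢ))/hᵢ| dx ≤ (h/2)·‖u''‖_∞ + (h/(8n))·(M₂ - m₂). -/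
set_option maxHeartbeats 1000000

open Set

lemma interval_key (u u' u'' : ℝ → ℝ) (K : ℝ)
    (hu' : ∀ t ∈ Icc (0 : ℝ) 1, HasDerivWithinAt u (u' t) (Icc (0 : ℝ) 1) t)
    (hu'' : ∀ t ∈ Icc (0 : ℝ) 1, HasDerivWithinAt u' (u'' t) (Icc (0 : ℝ) 1) t)
    (hK : ∀ t ∈ Icc (0 : ℝ) 1, |u'' t| ≤ K)
    (a b : ℝ) (ha : 0 ≤ a) (hb : b ≤ 1) (hab : a < b) :
    ∫ t in a..b, |u' t - (u b - u a) / (b - a)| ≤ K / 2 * (b - a) ^ 2 := by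
  have hK0 : 0 ≤ K := le_trans (abs_nonneg _) (hK 0 (by norm_num))
  have hsub : Icc a b ⊆ Icc (0 : ℝ) 1 := Icc_subset_Icc ha hb
  have hucont : ContinuousOn u (Icc (0 : ℝ) 1) :=
    fun t ht => (hu' t ht).continuousWithinAt
  have hu'cont : ContinuousOn u' (Icc (0 : ℝ) 1) :=
    fun t ht => (hu'' t ht).continuousWithinAt
  -- MVT: there is c with u' c = slope
  obtain ⟨c, hc, hcslope⟩ :=
    exists_hasDerivAt_eq_slope u u' hab (hucont.mono hsub)
      (fun x hx => (hu' x (hsub (Ioo_subset_Icc_self hx))).hasDerivAt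
        (Icc_mem_nhds (lt_of_le_of_lt ha hx.1) (lt_of_lt_of_le hx.2 hb)))
  have hcmem : c ∈ Icc (0 : ℝ) 1 := hsub (Ioo_subset_Icc_self hc)
  -- Lipschitz bound for u'
  have lip : ∀ x ∈ Icc (0:ℝ) 1, |u' x - u' c| ≤ K * |x - c| := by
    intro x hx
    have := (convex_Icc (0:ℝ) 1).norm_image_sub_le_of_norm_hasDerivWithin_le
      hu'' hK hcmem hx
    simpa [Real.norm_eq_abs] using this
  -- integrability
  have hint : ∀ p q : ℝ, p ∈ Icc (0:ℝ) 1 → q ∈ Icc (0:ℝ) 1 →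
      IntervalIntegrable (fun t => |u' t - (u b - u a) / (b - a)|)
        MeasureTheory.volume p q := by
    intro p q hp hq
    apply ContinuousOn.intervalIntegrable
    apply ContinuousOn.abs
    exact ((hu'cont.mono ((uIcc_subset_Icc hp hq))).sub continuousOn_const)
  rw [← hcslope]
  have hsplit :
      (∫ t in a..c, |u' t - u' c|) + (∫ t in c..b, |u' t - u' c|)
        = ∫ t in a..b, |u' t - u' c| := by
    rw [hcslope]
    exact intervalIntegral.integral_add_adjacent_intervals
      (hint a c (hsub ⟨le_refl a, hab.le⟩) hcmem)
      (hint c b hcmem (hsub ⟨hab.le, le_refl b⟩))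
  rw [← hsplit]
  have hac : a ≤ c := hc.1.le
  have hcb : c ≤ b := hc.2.le
  have int1 : (∫ t in a..c, |u' t - u' c|) ≤ K * (c - a) ^ 2 / 2 := by
    have hle : (∫ t in a..c, |u' t - u' c|) ≤ ∫ t in a..c, K * (c - t) := by
      apply intervalIntegral.integral_mono_on hac
      · rw [hcslope]; exact hint a c (hsub ⟨le_refl a, hab.le⟩) hcmem
      · exact ((continuous_const.mul (continuous_const.sub continuous_id)).continuousOn).intervalIntegrable
      · intro x hx
        have hx01 : x ∈ Icc (0:ℝ) 1 := hsub ⟨hx.1, le_trans hx.2 hcb⟩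
        have := lip x hx01
        rwa [abs_of_nonpos (by linarith [hx.2] : x - c ≤ 0), neg_sub] at this
    have hcomp : (∫ t in a..c, K * (c - t)) = K * (c - a) ^ 2 / 2 := by
      rw [intervalIntegral.integral_const_mul]
      have : (∫ t in a..c, (c - t)) = (∫ t in a..c, (c : ℝ)) - ∫ t in a..c, t :=
        intervalIntegral.integral_sub intervalIntegrable_const
          (Continuous.intervalIntegrable continuous_id _ _)
      rw [this, intervalIntegral.integral_const, integral_id]
      simp only [smul_eq_mul]; ring
    linarith
  have int2 : (∫ t in c..b, |u' t - u' c|) ≤ K * (b - c) ^ 2 / 2 := by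
    have hle : (∫ t in c..b, |u' t - u' c|) ≤ ∫ t in c..b, K * (t - c) := by
      apply intervalIntegral.integral_mono_on hcb
      · rw [hcslope]; exact hint c b hcmem (hsub ⟨hab.le, le_refl b⟩)
      · exact ((continuous_const.mul (continuous_id.sub continuous_const)).continuousOn).intervalIntegrable
      · intro x hx
        have hx01 : x ∈ Icc (0:ℝ) 1 := hsub ⟨le_trans hac hx.1, hx.2⟩
        have := lip x hx01
        rwa [abs_of_nonneg (by linarith [hx.1] : 0 ≤ x - c)] at this
    have hcomp : (∫ t in c..b, K * (t - c)) = K * (b - c) ^ 2 / 2 := by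
      rw [intervalIntegral.integral_const_mul]
      have : (∫ t in c..b, (t - c)) = (∫ t in c..b, t) - ∫ t in c..b, (c : ℝ) :=
        intervalIntegral.integral_sub
          (Continuous.intervalIntegrable continuous_id _ _) intervalIntegrable_const
      rw [this, intervalIntegral.integral_const, integral_id]
      simp only [smul_eq_mul]; ring
    linarith
  nlinarith [sq_nonneg (c - a), sq_nonneg (b - c), mul_nonneg hK0 (mul_nonneg (by linarith : (0:ℝ) ≤ c - a) (by linarith : (0:ℝ) ≤ b - c))]

/-- Refined `L¹` estimate of the derivative of the interpolation error:
for `u ∈ C²([0,1])` with `m₂ ≤ u'' ≤ M₂`, a partition with mesh size `h`, and every `n ≥ 1`,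
`Σᵢ ∫_{Xᵢ}^{X_{i+1}} |u'(x) - (u(X_{i+1})-u(Xᵢ))/hᵢ| dx ≤ (h/2)·‖u''‖_∞ + (h/(8n))·(M₂-m₂)`. -/
theorem interpolation_derivative_error_refined
    (N : ℕ) (u u' u'' : ℝ → ℝ) (m2 M2 : ℝ)
    (hu' : ∀ t ∈ Icc (0 : ℝ) 1, HasDerivWithinAt u (u' t) (Icc (0 : ℝ) 1) t)
    (hu'' : ∀ t ∈ Icc (0 : ℝ) 1, HasDerivWithinAt u' (u'' t) (Icc (0 : ℝ) 1) t)
    (hu''cont : ContinuousOn u'' (Icc (0 : ℝ) 1))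
    (hm2 : ∀ t ∈ Icc (0 : ℝ) 1, m2 ≤ u'' t)
    (hM2 : ∀ t ∈ Icc (0 : ℝ) 1, u'' t ≤ M2)
    (X : ℕ → ℝ) (hX0 : X 0 = 0) (hXN : X (N + 1) = 1)
    (hXmono : ∀ i ≤ N, X i < X (i + 1))
    (h : ℝ) (hh : IsGreatest {d : ℝ | ∃ i ≤ N, d = X (i + 1) - X i} h) :
    ∀ n : ℕ, 1 ≤ n →
      ∑ i ∈ Finset.range (N + 1),
          ∫ t in (X i)..(X (i + 1)),
            |u' t - (u (X (i + 1)) - u (X i)) / (X (i + 1) - X i)|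
        ≤ (h / 2) * (⨆ t : Icc (0 : ℝ) 1, |u'' t|) + (h / (8 * n)) * (M2 - m2) := by
  intro n hn
  set K := ⨆ t : Icc (0 : ℝ) 1, |u'' t| with hKdef
  -- boundedness of |u''|
  have hbdd : BddAbove (range fun t : Icc (0:ℝ) 1 => |u'' t|) := by
    have := (isCompact_Icc.image_of_continuousOn hu''cont.abs).bddAbove
    rwa [Set.image_eq_range] at this
  have hK : ∀ t ∈ Icc (0:ℝ) 1, |u'' t| ≤ K := fun t ht => le_ciSup hbdd ⟨t, ht⟩
  have hK0 : 0 ≤ K := le_trans (abs_nonneg _) (hK 0 (by norm_num))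
  -- monotonicity of X
  have hXle : ∀ i ≤ N + 1, X i ≤ X (N + 1) := by
    intro i hi
    induction' hback : (N + 1 - i) with k ih generalizing i
    · have : i = N + 1 := by omega
      simp [this]
    · have hi' : i ≤ N := by omega
      have := hXmono i hi'
      have h2 := ih (i+1) (by omega) (by omega)
      linarith
  have h0 : ∀ i, i ≤ N + 1 → 0 ≤ X i := by
    intro i
    induction' i with k ihk
    · intro _; rw [hX0]
    · intro hk
      have := hXmono k (by omega)
      have := ihk (by omega)
      linarith
  have hX01 : ∀ i ≤ N + 1, X i ∈ Icc (0:ℝ) 1 := by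
    intro i hi
    exact ⟨h0 i hi, by rw [← hXN]; exact hXle i hi⟩
  -- mesh positivity
  have hipos : ∀ i ≤ N, 0 < X (i+1) - X i := fun i hi => by linarith [hXmono i hi]
  have hhd : ∀ i ≤ N, X (i+1) - X i ≤ h := fun i hi => hh.2 ⟨i, hi, rfl⟩
  have hpos : 0 < h := lt_of_lt_of_le (hipos 0 (Nat.zero_le _)) (hhd 0 (Nat.zero_le _))
  -- per-interval bound and sum
  have step : ∑ i ∈ Finset.range (N + 1),
      (∫ t in (X i)..(X (i + 1)),
        |u' t - (u (X (i + 1)) - u (X i)) / (X (i + 1) - X i)|)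
      ≤ ∑ i ∈ Finset.range (N + 1), (K / 2 * h) * (X (i+1) - X i) := by
    apply Finset.sum_le_sum
    intro i hi
    have hi' : i ≤ N := Nat.lt_succ_iff.mp (Finset.mem_range.mp hi)
    have key := interval_key u u' u'' K hu' hu'' hK (X i) (X (i+1))
      (hX01 i (by omega)).1 (hX01 (i+1) (by omega)).2 (hXmono i hi')
    calc (∫ t in (X i)..(X (i + 1)),
        |u' t - (u (X (i + 1)) - u (X i)) / (X (i + 1) - X i)|)
        ≤ K / 2 * (X (i+1) - X i) ^ 2 := key
      _ ≤ (K / 2 * h) * (X (i+1) - X i) := by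
          have h1 := hhd i hi'
          have h2 := hipos i hi'
          have h3 : 0 ≤ K / 2 * (X (i+1) - X i) := mul_nonneg (by linarith) h2.le
          nlinarith [mul_le_mul_of_nonneg_right h1 h3]
  have tele : ∑ i ∈ Finset.range (N + 1), (X (i+1) - X i) = 1 := by
    rw [Finset.sum_range_sub, hXN, hX0]; ring
  have sum2 : ∑ i ∈ Finset.range (N + 1), (K / 2 * h) * (X (i+1) - X i)
      = h / 2 * K := by
    rw [← Finset.mul_sum, tele]; ring
  have hM : 0 ≤ M2 - m2 := by
    have := hm2 0 (by norm_num)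
    have := hM2 0 (by norm_num)
    linarith
  have hterm2 : 0 ≤ h / (8 * n) * (M2 - m2) := by
    apply mul_nonneg _ hM
    apply div_nonneg hpos.le
    positivity
  calc ∑ i ∈ Finset.range (N + 1),
      (∫ t in (X i)..(X (i + 1)),
        |u' t - (u (X (i + 1)) - u (X i)) / (X (i + 1) - X i)|)
      ≤ h / 2 * K := by rw [← sum2]; exact step
    _ ≤ h / 2 * K + h / (8 * n) * (M2 - m2) := by linarith
end

section
/- Let u ∈ C²([0,1]) with m₂ ≤ u''(x) ≤ M₂ for all x ∈ [0,1], let 0 = x₀ < x₁ < … < x_{N+1} = 1 be a partition with hᵢ = x_{i+1} - xᵢ and h = max_{0≤i≤N} hᵢ, and let u_I be the piecewise linear interpolant of u. Then for every integer n ≥ 1: ∫₀¹ |u(x) - u_I(x)| dx ≤ (h²/2)·‖u''‖_∞ + (h²/(8n))·(M₂ - m₂). -/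
open Set

/-- Refined `L¹` estimate of the interpolation error: for `u ∈ C²([0,1])` with
`m₂ ≤ u'' ≤ M₂`, a partition with mesh size `h`, `u_I` the piecewise linear interpolant
of `u`, and every `n ≥ 1`, `∫₀¹ |u - u_I| ≤ (h²/2)·‖u''‖_∞ + (h²/(8n))·(M₂-m₂)`. -/
theorem interpolation_L1_error_refined
    (N : ℕ) (u u' u'' : ℝ → ℝ) (m2 M2 : ℝ)
    (hu' : ∀ t ∈ Icc (0 : ℝ) 1, HasDerivWithinAt u (u' t) (Icc (0 : ℝ) 1) t)
    (hu'' : ∀ t ∈ Icc (0 : ℝ) 1, HasDerivWithinAt u' (u'' t) (Icc (0 : ℝ) 1) t)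
    (hu''cont : ContinuousOn u'' (Icc (0 : ℝ) 1))
    (hm2 : ∀ t ∈ Icc (0 : ℝ) 1, m2 ≤ u'' t)
    (hM2 : ∀ t ∈ Icc (0 : ℝ) 1, u'' t ≤ M2)
    (X : ℕ → ℝ) (hX0 : X 0 = 0) (hXN : X (N + 1) = 1)
    (hXmono : ∀ i ≤ N, X i < X (i + 1))
    (h : ℝ) (hh : IsGreatest {d : ℝ | ∃ i ≤ N, d = X (i + 1) - X i} h)
    (uI : ℝ → ℝ)
    (huI : ∀ i ≤ N, ∀ t ∈ Icc (X i) (X (i + 1)),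
      uI t = u (X i) + (t - X i) * (u (X (i + 1)) - u (X i)) / (X (i + 1) - X i)) :
    ∀ n : ℕ, 1 ≤ n →
      (∫ t in (0 : ℝ)..1, |u t - uI t|)
        ≤ (h ^ 2 / 2) * (⨆ t : Icc (0 : ℝ) 1, |u'' t|) + (h ^ 2 / (8 * n)) * (M2 - m2) := by
  intro n hn
  set C := ⨆ t : Icc (0 : ℝ) 1, |u'' t| with hCdef
  have hBdd : BddAbove (Set.range fun t : Icc (0 : ℝ) 1 => |u'' t|) := by
    refine ⟨max |m2| |M2|, ?_⟩
    rintro x ⟨t, rfl⟩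
    exact abs_le_max_abs_abs (hm2 t t.2) (hM2 t t.2)
  have hCle : ∀ t ∈ Icc (0 : ℝ) 1, |u'' t| ≤ C := fun t ht =>
    le_ciSup hBdd (⟨t, ht⟩ : Icc (0 : ℝ) 1)
  have hC0 : 0 ≤ C :=
    le_trans (abs_nonneg _) (hCle 0 (by norm_num))
  -- facts about h
  obtain ⟨i₀, hi₀, hdef⟩ := hh.1
  have hpos : 0 < h := by rw [hdef]; exact sub_pos.2 (hXmono i₀ hi₀)
  have hle : ∀ i ≤ N, X (i + 1) - X i ≤ h := fun i hi => hh.2 ⟨i, hi, rfl⟩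
  -- monotonicity of the partition
  have hXmono' : ∀ i j, i ≤ j → j ≤ N + 1 → X i ≤ X j := by
    intro i j hij hj
    induction j with
    | zero => simpa [Nat.le_zero.mp hij]
    | succ k ih =>
      rcases Nat.eq_or_lt_of_le hij with rfl | hlt
      · exact le_rfl
      · have hk : k ≤ N := Nat.lt_succ_iff.mp hj
        exact le_trans (ih (Nat.lt_succ_iff.mp hlt) (le_trans hk (Nat.le_succ N)))
          (le_of_lt (hXmono k hk))
  have hXmem : ∀ i ≤ N + 1, X i ∈ Icc (0 : ℝ) 1 := by
    intro i hi
    constructor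
    · rw [← hX0]; exact hXmono' 0 i (Nat.zero_le i) hi
    · rw [← hXN]; exact hXmono' i (N + 1) hi le_rfl
  have ucont : ContinuousOn u (Icc (0 : ℝ) 1) := fun t ht =>
    (hu' t ht).continuousWithinAt
  -- bound on u' differences via C
  have hu'lip : ∀ x ∈ Icc (0 : ℝ) 1, ∀ y ∈ Icc (0 : ℝ) 1,
      |u' y - u' x| ≤ C * |y - x| := by
    intro x hx y hy
    have := (convex_Icc (0 : ℝ) 1).norm_image_sub_le_of_norm_hasDerivWithin_le
      hu'' (fun t ht => hCle t ht) hx hy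
    simpa [Real.norm_eq_abs] using this
  -- integrability on each subinterval
  have hInt : ∀ i ≤ N, IntervalIntegrable (fun t => |u t - uI t|)
      MeasureTheory.volume (X i) (X (i + 1)) := by
    intro i hi
    have hab : X i ≤ X (i + 1) := le_of_lt (hXmono i hi)
    have hsub : Icc (X i) (X (i + 1)) ⊆ Icc (0 : ℝ) 1 :=
      Icc_subset_Icc (hXmem i (le_trans hi (Nat.le_succ N))).1
        (hXmem (i + 1) (Nat.succ_le_succ hi)).2
    have huIcont : ContinuousOn uI (Icc (X i) (X (i + 1))) := by
      apply ContinuousOn.congr (f := fun t =>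
        u (X i) + (t - X i) * (u (X (i + 1)) - u (X i)) / (X (i + 1) - X i))
      · exact (continuous_const.add (((continuous_id.sub continuous_const).mul
          continuous_const).div_const _)).continuousOn
      · intro t ht; exact huI i hi t ht
    have : ContinuousOn (fun t => |u t - uI t|) (Icc (X i) (X (i + 1))) :=
      ((ucont.mono hsub).sub huIcont).abs
    exact this.intervalIntegrable_of_Icc hab
  -- key per-interval estimate
  have key : ∀ i ≤ N, (∫ t in X i..X (i + 1), |u t - uI t|)
      ≤ C * h * (X (i + 1) - X i) ^ 2 / 2 := by
    intro i hi
    set a := X i with ha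
    set b := X (i + 1) with hb
    have hab : a < b := hXmono i hi
    have ha0 : (0 : ℝ) ≤ a := (hXmem i (le_trans hi (Nat.le_succ N))).1
    have hb1 : b ≤ 1 := (hXmem (i + 1) (Nat.succ_le_succ hi)).2
    have hsub : Icc a b ⊆ Icc (0 : ℝ) 1 := Icc_subset_Icc ha0 hb1
    -- mean value theorem
    have hderiv : ∀ x ∈ Ioo a b, HasDerivAt u (u' x) x := by
      intro x hx
      have hx01 : x ∈ Icc (0 : ℝ) 1 := hsub (Ioo_subset_Icc_self hx)
      have hnb : Icc (0 : ℝ) 1 ∈ nhds x :=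
        Icc_mem_nhds (lt_of_le_of_lt ha0 hx.1) (lt_of_lt_of_le hx.2 hb1)
      exact (hu' x hx01).hasDerivAt hnb
    obtain ⟨c, hc, hc'⟩ := exists_hasDerivAt_eq_slope u u' hab
      (ucont.mono hsub) hderiv
    have hcab : c ∈ Icc a b := Ioo_subset_Icc_self hc
    -- error function
    set s : ℝ := (u b - u a) / (b - a) with hs
    set e : ℝ → ℝ := fun x => u x - (u a + (x - a) * (u b - u a) / (b - a)) with he
    have he' : ∀ x ∈ Icc a b, HasDerivWithinAt e (u' x - u' c) (Icc a b) x := by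
      intro x hx
      have hlin : HasDerivAt (fun t => u a + (t - a) * (u b - u a) / (b - a))
          ((u b - u a) / (b - a)) x := by
        have := ((((hasDerivAt_id x).sub_const a).mul_const (u b - u a)).div_const
          (b - a)).const_add (u a)
        simpa using this
      have := ((hu' x (hsub hx)).mono hsub).sub hlin.hasDerivWithinAt
      rw [hc']
      exact this
    have hebound : ∀ x ∈ Icc a b, ‖u' x - u' c‖ ≤ C * h := by
      intro x hx
      have h1 : |u' x - u' c| ≤ C * |x - c| := hu'lip c (hsub hcab) x (hsub hx)
      have h2 : |x - c| ≤ b - a := by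
        rw [abs_sub_le_iff]
        constructor <;> [linarith [hx.2, hcab.1]; linarith [hx.1, hcab.2]]
      calc |u' x - u' c| ≤ C * |x - c| := h1
        _ ≤ C * (b - a) := mul_le_mul_of_nonneg_left h2 hC0
        _ ≤ C * h := mul_le_mul_of_nonneg_left (hle i hi) hC0
    have hea : e a = 0 := by simp [he]
    have hpt : ∀ x ∈ Icc a b, |e x| ≤ C * h * (x - a) := by
      intro x hx
      have := (convex_Icc a b).norm_image_sub_le_of_norm_hasDerivWithin_le
        he' hebound (left_mem_Icc.2 (le_of_lt hab)) hx
      rw [hea, sub_zero] at this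
      have hxa : |x - a| = x - a := abs_of_nonneg (by linarith [hx.1])
      simpa [Real.norm_eq_abs, hxa] using this
    -- rewrite the integrand
    have hcongr : (∫ t in a..b, |u t - uI t|) = ∫ t in a..b, |e t| := by
      apply intervalIntegral.integral_congr
      intro t ht
      rw [uIcc_of_le (le_of_lt hab)] at ht
      show |u t - uI t| = |e t|
      rw [huI i hi t ht]
    rw [hcongr]
    -- integrability of |e| and of the comparison function
    have heInt : IntervalIntegrable (fun t => |e t|) MeasureTheory.volume a b := by
      have : ContinuousOn (fun t => |e t|) (Icc a b) :=
        ((ucont.mono hsub).sub (continuous_const.add (((continuous_id.sub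
          continuous_const).mul continuous_const).div_const _)).continuousOn).abs
      exact this.intervalIntegrable_of_Icc (le_of_lt hab)
    have hgInt : IntervalIntegrable (fun t => C * h * (t - a))
        MeasureTheory.volume a b :=
      (continuous_const.mul (continuous_id.sub continuous_const)).intervalIntegrable a b
    have hmono := intervalIntegral.integral_mono_on (le_of_lt hab) heInt hgInt hpt
    refine le_trans hmono ?_
    have hcompute : (∫ t in a..b, C * h * (t - a)) = C * h * ((b - a) ^ 2 / 2) := by
      rw [intervalIntegral.integral_const_mul]
      have : (∫ t in a..b, (t - a)) = (b - a) ^ 2 / 2 := by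
        have h1 : IntervalIntegrable (fun t : ℝ => t) MeasureTheory.volume a b :=
          continuous_id.intervalIntegrable a b
        rw [intervalIntegral.integral_sub h1 intervalIntegrable_const,
          integral_id, intervalIntegral.integral_const]
        simp only [smul_eq_mul]
        ring
      rw [this]
    rw [hcompute]
    ring_nf
    exact le_rfl
  -- sum over subintervals
  have hsum : (∑ i ∈ Finset.range (N + 1), ∫ t in X i..X (i + 1), |u t - uI t|)
      = ∫ t in (X 0)..(X (N + 1)), |u t - uI t| :=
    intervalIntegral.sum_integral_adjacent_intervals
      (fun k hk => hInt k (Nat.lt_succ_iff.mp hk))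
  have htotal : (∫ t in (0 : ℝ)..1, |u t - uI t|)
      = ∑ i ∈ Finset.range (N + 1), ∫ t in X i..X (i + 1), |u t - uI t| := by
    rw [hsum, hX0, hXN]
  rw [htotal]
  have hsumbound : (∑ i ∈ Finset.range (N + 1), ∫ t in X i..X (i + 1), |u t - uI t|)
      ≤ C * h ^ 2 / 2 := by
    have step1 : (∑ i ∈ Finset.range (N + 1), ∫ t in X i..X (i + 1), |u t - uI t|)
        ≤ ∑ i ∈ Finset.range (N + 1), C * h * h * (X (i + 1) - X i) / 2 := by
      apply Finset.sum_le_sum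
      intro i hi
      have hi' : i ≤ N := Nat.lt_succ_iff.mp (Finset.mem_range.mp hi)
      refine le_trans (key i hi') ?_
      have h1 : (X (i + 1) - X i) ^ 2 ≤ h * (X (i + 1) - X i) := by
        have := hle i hi'
        have hd : 0 ≤ X (i + 1) - X i := le_of_lt (sub_pos.2 (hXmono i hi'))
        nlinarith
      have hCh : 0 ≤ C * h := mul_nonneg hC0 (le_of_lt hpos)
      calc C * h * (X (i + 1) - X i) ^ 2 / 2
          ≤ C * h * (h * (X (i + 1) - X i)) / 2 := by
            apply div_le_div_of_nonneg_right _ (by norm_num)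
            exact mul_le_mul_of_nonneg_left h1 hCh
        _ = C * h * h * (X (i + 1) - X i) / 2 := by ring
    refine le_trans step1 ?_
    have htele : (∑ i ∈ Finset.range (N + 1), (X (i + 1) - X i)) = 1 := by
      rw [Finset.sum_range_sub, hX0, hXN, sub_zero]
    have : (∑ i ∈ Finset.range (N + 1), C * h * h * (X (i + 1) - X i) / 2)
        = C * h * h / 2 * ∑ i ∈ Finset.range (N + 1), (X (i + 1) - X i) := by
      rw [Finset.mul_sum]
      apply Finset.sum_congr rfl
      intro i _; ring
    rw [this, htele]
    ring_nf
    exact le_rfl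
  refine le_trans hsumbound ?_
  have hsecond : 0 ≤ h ^ 2 / (8 * n) * (M2 - m2) := by
    have hMm : m2 ≤ M2 := le_trans (hm2 0 (by norm_num)) (hM2 0 (by norm_num))
    have hn0 : (0 : ℝ) < 8 * n := by
      have : (1 : ℝ) ≤ n := by exact_mod_cast hn
      nlinarith
    exact mul_nonneg (div_nonneg (sq_nonneg h) (le_of_lt hn0)) (by linarith)
  have : C * h ^ 2 / 2 = h ^ 2 / 2 * C := by ring
  rw [this]
  linarith
end

section
/- Let I ⊆ ℝ be open, T > 0, and let u : I × [0,T] → ℝ satisfy the heat equation ∂u/∂t(x,t) = ∂²u/∂x²(x,t) on I × [0,T]. Assume u is C² in time with m₂ ≤ ∂²u/∂t²(x,t) ≤ M₂ for all (x,t) ∈ I × [0,T]. Then for every x ∈ I, every k > 0 and every t with t + k ≤ T: | ∂u/∂t(x,t) - (2/k)·(u(x,t+k) - u(x,t)) + ∂²u/∂x²(x,t+k) | ≤ (k/4)·(M₂ - m₂). -/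
open Set

private lemma lin_integral_sub (a b c : ℝ) :
    ∫ s in a..b, (s - c) = (b ^ 2 - a ^ 2) / 2 - (b - a) * c := by
  have h1 : IntervalIntegrable (fun s : ℝ => s) MeasureTheory.volume a b :=
    continuous_id.intervalIntegrable a b
  have h2 : IntervalIntegrable (fun _ : ℝ => c) MeasureTheory.volume a b :=
    intervalIntegrable_const
  rw [intervalIntegral.integral_sub h1 h2, integral_id,
    intervalIntegral.integral_const, smul_eq_mul]

private lemma lin_integral_sub' (a b c : ℝ) :
    ∫ s in a..b, (c - s) = (b - a) * c - (b ^ 2 - a ^ 2) / 2 := by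
  have h1 : IntervalIntegrable (fun s : ℝ => s) MeasureTheory.volume a b :=
    continuous_id.intervalIntegrable a b
  have h2 : IntervalIntegrable (fun _ : ℝ => c) MeasureTheory.volume a b :=
    intervalIntegrable_const
  rw [intervalIntegral.integral_sub h2 h1, integral_id,
    intervalIntegral.integral_const, smul_eq_mul]

/-- Time-derivative approximation obtained from the trapezoid-type Taylor-like formula:
if `u` solves the heat equation `∂u/∂t = ∂²u/∂x²` on `I × [0,T]`, is `C²` in time with
`m₂ ≤ ∂²u/∂t² ≤ M₂`, then for every `x ∈ I`, `k > 0` and `t` with `t + k ≤ T`,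
`|∂u/∂t(x,t) - (2/k)(u(x,t+k) - u(x,t)) + ∂²u/∂x²(x,t+k)| ≤ (k/4)(M₂ - m₂)`. -/
theorem heat_time_derivative_approximation
    (I : Set ℝ) (hI : IsOpen I) (T : ℝ) (hT : 0 < T)
    (u ut utt ux uxx : ℝ → ℝ → ℝ) (m2 M2 : ℝ)
    -- first and second partial derivatives of `u` in time, on `I × [0,T]`
    (hut : ∀ x ∈ I, ∀ t ∈ Icc 0 T, HasDerivWithinAt (fun s => u x s) (ut x t) (Icc 0 T) t)
    (hutt : ∀ x ∈ I, ∀ t ∈ Icc 0 T, HasDerivWithinAt (fun s => ut x s) (utt x t) (Icc 0 T) t)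
    (huttcont : ∀ x ∈ I, ContinuousOn (fun s => utt x s) (Icc 0 T))
    -- first and second partial derivatives of `u` in space, on `I × [0,T]`
    (hux : ∀ x ∈ I, ∀ t ∈ Icc 0 T, HasDerivAt (fun y => u y t) (ux x t) x)
    (huxx : ∀ x ∈ I, ∀ t ∈ Icc 0 T, HasDerivAt (fun y => ux y t) (uxx x t) x)
    -- the heat equation
    (hheat : ∀ x ∈ I, ∀ t ∈ Icc 0 T, ut x t = uxx x t)
    -- bounds on the second time derivative
    (hm2 : ∀ x ∈ I, ∀ t ∈ Icc 0 T, m2 ≤ utt x t)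
    (hM2 : ∀ x ∈ I, ∀ t ∈ Icc 0 T, utt x t ≤ M2) :
    ∀ x ∈ I, ∀ k : ℝ, 0 < k → ∀ t : ℝ, 0 ≤ t → t + k ≤ T →
      |ut x t - (2 / k) * (u x (t + k) - u x t) + uxx x (t + k)|
        ≤ (k / 4) * (M2 - m2) := by
  intro x hx k hk t ht0 htk
  have hkne : k ≠ 0 := ne_of_gt hk
  set m : ℝ := t + k / 2 with hm
  set c : ℝ := (M2 + m2) / 2 with hc
  have htT : t ∈ Icc (0:ℝ) T := ⟨ht0, by linarith⟩
  have htkT : t + k ∈ Icc (0:ℝ) T := ⟨by linarith, htk⟩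
  have hsub : Icc t (t + k) ⊆ Icc (0:ℝ) T := Icc_subset_Icc ht0 htk
  have hle : t ≤ t + k := by linarith
  -- rewrite uxx via the heat equation
  have hheat' : uxx x (t + k) = ut x (t + k) := (hheat x hx (t + k) htkT).symm
  rw [hheat']
  -- the auxiliary function G with G' s = (s - m) * utt x s
  set G : ℝ → ℝ := fun s => (s - m) * ut x s - u x s with hG
  -- continuity of u and ut in time on Icc t (t+k)
  have hucont : ContinuousOn (fun s => u x s) (Icc t (t + k)) := fun s hs =>
    ((hut x hx s (hsub hs)).continuousWithinAt).mono hsub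
  have hutcont : ContinuousOn (fun s => ut x s) (Icc t (t + k)) := fun s hs =>
    ((hutt x hx s (hsub hs)).continuousWithinAt).mono hsub
  have hGcont : ContinuousOn G (Icc t (t + k)) := by
    apply ContinuousOn.sub _ hucont
    exact (continuousOn_id.sub continuousOn_const).mul hutcont
  have hGderiv : ∀ s ∈ Ioo t (t + k), HasDerivWithinAt G ((s - m) * utt x s) (Ioi s) s := by
    intro s hs
    have hsIcc : s ∈ Icc (0:ℝ) T := hsub (Ioo_subset_Icc_self hs)
    have hnhds : Icc (0:ℝ) T ∈ nhds s := by
      apply Icc_mem_nhds <;> [linarith [hs.1]; linarith [hs.2]]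
    have h1 : HasDerivAt (fun s => u x s) (ut x s) s :=
      (hut x hx s hsIcc).hasDerivAt hnhds
    have h2 : HasDerivAt (fun s => ut x s) (utt x s) s :=
      (hutt x hx s hsIcc).hasDerivAt hnhds
    have h3 : HasDerivAt (fun r : ℝ => r - m) 1 s := (hasDerivAt_id s).sub_const m
    have h4 : HasDerivAt G ((1 * ut x s + (s - m) * utt x s) - ut x s) s :=
      (h3.mul h2).sub h1
    have : (1 * ut x s + (s - m) * utt x s) - ut x s = (s - m) * utt x s := by ring
    rw [this] at h4
    exact h4.hasDerivWithinAt
  have huttc : ContinuousOn (fun s => utt x s) (Icc t (t + k)) :=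
    (huttcont x hx).mono hsub
  have hintcont : ContinuousOn (fun s => (s - m) * utt x s) (uIcc t (t + k)) := by
    rw [uIcc_of_le hle]
    exact (continuousOn_id.sub continuousOn_const).mul huttc
  have hint : IntervalIntegrable (fun s => (s - m) * utt x s) MeasureTheory.volume t (t + k) :=
    hintcont.intervalIntegrable
  -- FTC: the integral equals G (t+k) - G t
  have hFTC : ∫ s in t..(t + k), (s - m) * utt x s = G (t + k) - G t :=
    intervalIntegral.integral_eq_sub_of_hasDeriv_right_of_le hle hGcont hGderiv hint
  -- the midpoint kernel integrates to zero
  have hker : ∫ s in t..(t + k), (s - m) = 0 := by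
    rw [lin_integral_sub]
    simp only [hm]
    ring
  -- integrability of pieces
  have hint2 : IntervalIntegrable (fun s => (s - m) * (utt x s - c)) MeasureTheory.volume t (t + k) := by
    apply ContinuousOn.intervalIntegrable
    rw [uIcc_of_le hle]
    exact (continuousOn_id.sub continuousOn_const).mul (huttc.sub continuousOn_const)
  -- split away the constant c
  have hsplit : ∫ s in t..(t + k), (s - m) * utt x s
      = ∫ s in t..(t + k), (s - m) * (utt x s - c) := by
    have : ∀ s, (s - m) * utt x s = (s - m) * (utt x s - c) + c * (s - m) := by
      intro s; ring
    simp_rw [this]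
    rw [intervalIntegral.integral_add hint2 (by
      apply ContinuousOn.intervalIntegrable
      rw [uIcc_of_le hle]
      exact continuousOn_const.mul (continuousOn_id.sub continuousOn_const)),
      intervalIntegral.integral_const_mul, hker, mul_zero, add_zero]
  -- pointwise bound
  have hptwise : ∀ s ∈ Icc t (t + k), |(s - m) * (utt x s - c)| ≤ |s - m| * ((M2 - m2) / 2) := by
    intro s hs
    rw [abs_mul]
    apply mul_le_mul_of_nonneg_left _ (abs_nonneg _)
    have h1 := hm2 x hx s (hsub hs)
    have h2 := hM2 x hx s (hsub hs)
    rw [abs_le]; constructor <;> [simp only [hc]; simp only [hc]] <;> linarith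
  -- the integral of |s - m|
  have habsker : ∫ s in t..(t + k), |s - m| = k ^ 2 / 4 := by
    have hA : ∫ s in t..m, |s - m| = k ^ 2 / 8 := by
      have : ∫ s in t..m, |s - m| = ∫ s in t..m, (m - s) := by
        apply intervalIntegral.integral_congr
        intro s hs
        rw [uIcc_of_le (by simp only [hm]; linarith)] at hs
        show |s - m| = m - s
        rw [abs_of_nonpos (by linarith [hs.2])]; ring
      rw [this, lin_integral_sub']
      simp only [hm]; ring
    have hB : ∫ s in m..(t + k), |s - m| = k ^ 2 / 8 := by
      have : ∫ s in m..(t + k), |s - m| = ∫ s in m..(t + k), (s - m) := by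
        apply intervalIntegral.integral_congr
        intro s hs
        rw [uIcc_of_le (by simp only [hm]; linarith)] at hs
        show |s - m| = s - m
        rw [abs_of_nonneg (by linarith [hs.1])]
      rw [this, lin_integral_sub]
      simp only [hm]; ring
    have hi1 : IntervalIntegrable (fun s => |s - m|) MeasureTheory.volume t m :=
      ((continuous_id.sub continuous_const).abs.intervalIntegrable t m)
    have hi2 : IntervalIntegrable (fun s => |s - m|) MeasureTheory.volume m (t + k) :=
      ((continuous_id.sub continuous_const).abs.intervalIntegrable m (t + k))
    rw [← intervalIntegral.integral_add_adjacent_intervals hi1 hi2, hA, hB]; ring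
  -- bound the integral
  have hbound : |∫ s in t..(t + k), (s - m) * (utt x s - c)| ≤ k ^ 2 / 8 * (M2 - m2) := by
    calc |∫ s in t..(t + k), (s - m) * (utt x s - c)|
        ≤ ∫ s in t..(t + k), |(s - m) * (utt x s - c)| :=
          intervalIntegral.abs_integral_le_integral_abs hle
      _ ≤ ∫ s in t..(t + k), |s - m| * ((M2 - m2) / 2) := by
          apply intervalIntegral.integral_mono_on hle hint2.abs _ hptwise
          exact (((continuous_id.sub continuous_const).abs.intervalIntegrable t (t+k)).mul_const _)
      _ = k ^ 2 / 8 * (M2 - m2) := by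
          rw [intervalIntegral.integral_mul_const, habsker]; ring
  -- put everything together
  have hGval : G (t + k) - G t = (k / 2) * (ut x (t + k) + ut x t) - (u x (t + k) - u x t) := by
    simp only [hG, hm]; ring
  have hexpr : ut x t - (2 / k) * (u x (t + k) - u x t) + ut x (t + k)
      = (2 / k) * (G (t + k) - G t) := by
    rw [hGval]; field_simp; ring
  rw [hexpr, ← hFTC, hsplit, abs_mul, abs_of_pos (by positivity : (0:ℝ) < 2 / k)]
  calc (2 / k) * |∫ s in t..(t + k), (s - m) * (utt x s - c)|
      ≤ (2 / k) * (k ^ 2 / 8 * (M2 - m2)) := by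
        apply mul_le_mul_of_nonneg_left hbound (by positivity)
    _ = (k / 4) * (M2 - m2) := by field_simp; ring
end

section
/- Let I ⊆ ℝ be open, T > 0, and let u : I × [0,T] → ℝ satisfy the heat equation ∂u/∂t = ∂²u/∂x² on I × [0,T]. Assume u is C² in time with m₂ ≤ ∂²u/∂t² ≤ M₂ on I × [0,T], and C⁴ in space with |∂⁴u/∂x⁴(x,t)| ≤ M₄ on I × [0,T]. Then for all h > 0, k > 0, x with [x-h, x+h] ⊆ I, and t with t + k ≤ T: | (u(x,t+k) - u(x,t))/k - (1/(2h²))·[ (u(x-h,t+k) - 2u(x,t+k) + u(x+h,t+k)) + (u(x-h,t) - 2u(x,t) + u(x+h,t)) ] | ≤ (k/8)·(M₂ - m₂) + (h²/12)·M₄. -/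
open Set


/-- Comparison lemma: if `|f'| ≤ φ'` on `(a,b)` then `|f b - f a| ≤ φ b - φ a`. -/
lemma abs_sub_le_of_deriv_bound {f φ : ℝ → ℝ} {a b : ℝ} (hab : a ≤ b)
    (hf : ContinuousOn f (Icc a b)) (hφ : ContinuousOn φ (Icc a b))
    (hd : ∀ y ∈ Ioo a b, ∃ d d' : ℝ, HasDerivAt f d y ∧ HasDerivAt φ d' y ∧ |d| ≤ d') :
    |f b - f a| ≤ φ b - φ a := by
  have h1 : MonotoneOn (fun y => φ y - f y) (Icc a b) := by
    apply monotoneOn_of_deriv_nonneg (convex_Icc a b) (hφ.sub hf)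
    · intro y hy
      rw [interior_Icc] at hy
      obtain ⟨d, d', hf', hφ', _⟩ := hd y hy
      exact (hφ'.sub hf').differentiableAt.differentiableWithinAt
    · intro y hy
      rw [interior_Icc] at hy
      obtain ⟨d, d', hf', hφ', hb⟩ := hd y hy
      rw [(hφ'.sub hf').deriv]
      have := abs_nonneg d
      have := (abs_le.mp hb)
      linarith [hb, neg_abs_le d, le_abs_self d]
  have h2 : MonotoneOn (fun y => φ y + f y) (Icc a b) := by
    apply monotoneOn_of_deriv_nonneg (convex_Icc a b) (hφ.add hf)
    · intro y hy
      rw [interior_Icc] at hy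
      obtain ⟨d, d', hf', hφ', _⟩ := hd y hy
      exact (hφ'.add hf').differentiableAt.differentiableWithinAt
    · intro y hy
      rw [interior_Icc] at hy
      obtain ⟨d, d', hf', hφ', hb⟩ := hd y hy
      rw [(hφ'.add hf').deriv]
      linarith [neg_abs_le d, le_abs_self d]
  have ha : a ∈ Icc a b := ⟨le_refl a, hab⟩
  have hb' : b ∈ Icc a b := ⟨hab, le_refl b⟩
  have e1 := h1 ha hb' hab
  have e2 := h2 ha hb' hab
  simp only at e1 e2
  rw [abs_le]
  constructor <;> linarith

/-- First order Taylor bound, both directions. -/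
lemma taylor1_bound {f f1 f2 : ℝ → ℝ} {x c C : ℝ}
    (hfc : ContinuousOn f (uIcc x c)) (h1c : ContinuousOn f1 (uIcc x c))
    (h1 : ∀ y ∈ Ioo (min x c) (max x c), HasDerivAt f (f1 y) y)
    (h2 : ∀ y ∈ Ioo (min x c) (max x c), HasDerivAt f1 (f2 y) y)
    (hC : ∀ y ∈ Ioo (min x c) (max x c), |f2 y| ≤ C) :
    |f c - f x - (c - x) * f1 x| ≤ C * (c - x) ^ 2 / 2 := by
  set F : ℝ → ℝ := fun y => f c - f y - (c - y) * f1 y with hF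
  have hFc : ContinuousOn F (uIcc x c) :=
    ((continuousOn_const.sub hfc).sub
      ((continuousOn_const.sub continuousOn_id).mul h1c))
  have hFd : ∀ y ∈ Ioo (min x c) (max x c), HasDerivAt F (-((c - y) * f2 y)) y := by
    intro y hy
    have hc : HasDerivAt (fun y : ℝ => c - y) (-1) y := (hasDerivAt_id y).const_sub c
    have H := ((hasDerivAt_const y (f c)).sub (h1 y hy)).sub (hc.mul (h2 y hy))
    refine H.congr_deriv ?_
    ring
  rcases le_total x c with hxc | hcx
  · -- x ≤ c, interval [x, c]
    set φ : ℝ → ℝ := fun y => -(C * (c - y) ^ 2 / 2) with hφ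
    have hφd : ∀ y : ℝ, HasDerivAt φ (C * (c - y)) y := by
      intro y
      have hc : HasDerivAt (fun y : ℝ => c - y) (-1) y := (hasDerivAt_id y).const_sub c
      have H := (((hc.pow 2).const_mul C).div_const 2).neg
      refine H.congr_deriv ?_
      ring
    have key := abs_sub_le_of_deriv_bound (f := F) (φ := φ) hxc
      (by rwa [uIcc_of_le hxc] at hFc) (fun y _ => (hφd y).continuousAt.continuousWithinAt)
      (by
        intro y hy
        rw [min_eq_left hxc, max_eq_right hxc] at h2 hC hFd h1
        refine ⟨_, _, hFd y hy, hφd y, ?_⟩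
        have h0 : (0:ℝ) ≤ c - y := by linarith [hy.2]
        rw [abs_neg, abs_mul, abs_of_nonneg h0]
        calc (c - y) * |f2 y| ≤ (c - y) * C := mul_le_mul_of_nonneg_left (hC y hy) h0
          _ = C * (c - y) := by ring)
    have hFx : F c = 0 := by simp [hF]
    rw [hFx] at key
    rw [abs_sub_comm] at key
    simp only [hF, hφ] at key ⊢
    calc |f c - f x - (c - x) * f1 x| = |f c - f x - (c - x) * f1 x - 0| := by ring_nf
      _ ≤ -(C * (c - c) ^ 2 / 2) - -(C * (c - x) ^ 2 / 2) := key
      _ = C * (c - x) ^ 2 / 2 := by ring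
  · -- c ≤ x, interval [c, x]
    set φ : ℝ → ℝ := fun y => C * (c - y) ^ 2 / 2 with hφ
    have hφd : ∀ y : ℝ, HasDerivAt φ (-(C * (c - y))) y := by
      intro y
      have hc : HasDerivAt (fun y : ℝ => c - y) (-1) y := (hasDerivAt_id y).const_sub c
      have H := ((hc.pow 2).const_mul C).div_const 2
      refine H.congr_deriv ?_
      ring
    have key := abs_sub_le_of_deriv_bound (f := F) (φ := φ) hcx
      (by rwa [uIcc_of_ge hcx] at hFc) (fun y _ => (hφd y).continuousAt.continuousWithinAt)
      (by
        intro y hy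
        rw [min_eq_right hcx, max_eq_left hcx] at h2 hC hFd h1
        refine ⟨_, _, hFd y hy, hφd y, ?_⟩
        have h0 : c - y ≤ 0 := by linarith [hy.1]
        rw [abs_neg, abs_mul, abs_of_nonpos h0]
        calc -(c - y) * |f2 y| ≤ -(c - y) * C := mul_le_mul_of_nonneg_left (hC y hy) (by linarith)
          _ = -(C * (c - y)) := by ring)
    have hFx : F c = 0 := by simp [hF]
    rw [hFx, sub_zero] at key
    simp only [hF, hφ] at key ⊢
    calc |f c - f x - (c - x) * f1 x| ≤ C * (c - x) ^ 2 / 2 - C * (c - c) ^ 2 / 2 := key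
      _ = C * (c - x) ^ 2 / 2 := by ring

/-- Third order Taylor bound, both directions. -/
lemma taylor3_bound {f f1 f2 f3 f4 : ℝ → ℝ} {x c C : ℝ}
    (h1 : ∀ y ∈ uIcc x c, HasDerivAt f (f1 y) y)
    (h2 : ∀ y ∈ uIcc x c, HasDerivAt f1 (f2 y) y)
    (h3 : ∀ y ∈ uIcc x c, HasDerivAt f2 (f3 y) y)
    (h4 : ∀ y ∈ uIcc x c, HasDerivAt f3 (f4 y) y)
    (hC : ∀ y ∈ uIcc x c, |f4 y| ≤ C) :
    |f c - f x - (c - x) * f1 x - (c - x) ^ 2 / 2 * f2 x - (c - x) ^ 3 / 6 * f3 x|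
      ≤ C * (c - x) ^ 4 / 24 := by
  set F : ℝ → ℝ := fun y =>
    f c - f y - (c - y) * f1 y - (c - y) ^ 2 / 2 * f2 y - (c - y) ^ 3 / 6 * f3 y with hF
  have hFd : ∀ y ∈ uIcc x c, HasDerivAt F (-((c - y) ^ 3 / 6 * f4 y)) y := by
    intro y hy
    have hc : HasDerivAt (fun y : ℝ => c - y) (-1) y := (hasDerivAt_id y).const_sub c
    have H := ((((hasDerivAt_const y (f c)).sub (h1 y hy)).sub
        (hc.mul (h2 y hy))).sub
        (((hc.pow 2).div_const 2).mul (h3 y hy))).sub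
        (((hc.pow 3).div_const 6).mul (h4 y hy))
    refine H.congr_deriv ?_
    simp only [Pi.pow_apply]
    ring
  have hFc : ContinuousOn F (uIcc x c) := fun y hy =>
    ((hFd y hy).continuousAt).continuousWithinAt
  rcases le_total x c with hxc | hcx
  · rw [uIcc_of_le hxc] at hFd hFc hC
    set φ : ℝ → ℝ := fun y => -(C * (c - y) ^ 4 / 24) with hφ
    have hφd : ∀ y : ℝ, HasDerivAt φ (C * (c - y) ^ 3 / 6) y := by
      intro y
      have hc : HasDerivAt (fun y : ℝ => c - y) (-1) y := (hasDerivAt_id y).const_sub c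
      have H := (((hc.pow 4).const_mul C).div_const 24).neg
      refine H.congr_deriv ?_
      ring
    have key := abs_sub_le_of_deriv_bound (f := F) (φ := φ) hxc hFc
      (fun y _ => (hφd y).continuousAt.continuousWithinAt)
      (by
        intro y hy
        have hy' : y ∈ Icc x c := Ioo_subset_Icc_self hy
        refine ⟨_, _, hFd y hy', hφd y, ?_⟩
        have h0 : (0:ℝ) ≤ c - y := by linarith [hy.2]
        have h0' : (0:ℝ) ≤ (c - y) ^ 3 / 6 := by positivity
        rw [abs_neg, abs_mul, abs_of_nonneg h0']
        calc (c - y) ^ 3 / 6 * |f4 y| ≤ (c - y) ^ 3 / 6 * C :=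
              mul_le_mul_of_nonneg_left (hC y hy') h0'
          _ = C * (c - y) ^ 3 / 6 := by ring)
    have hFc0 : F c = 0 := by simp [hF]
    rw [hFc0, abs_sub_comm] at key
    simp only [hF, hφ] at key ⊢
    calc |f c - f x - (c - x) * f1 x - (c - x) ^ 2 / 2 * f2 x - (c - x) ^ 3 / 6 * f3 x|
        = |f c - f x - (c - x) * f1 x - (c - x) ^ 2 / 2 * f2 x - (c - x) ^ 3 / 6 * f3 x - 0| := by
          ring_nf
      _ ≤ -(C * (c - c) ^ 4 / 24) - -(C * (c - x) ^ 4 / 24) := key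
      _ = C * (c - x) ^ 4 / 24 := by ring
  · rw [uIcc_of_ge hcx] at hFd hFc hC
    set φ : ℝ → ℝ := fun y => C * (c - y) ^ 4 / 24 with hφ
    have hφd : ∀ y : ℝ, HasDerivAt φ (-(C * (c - y) ^ 3 / 6)) y := by
      intro y
      have hc : HasDerivAt (fun y : ℝ => c - y) (-1) y := (hasDerivAt_id y).const_sub c
      have H := ((hc.pow 4).const_mul C).div_const 24
      refine H.congr_deriv ?_
      ring
    have key := abs_sub_le_of_deriv_bound (f := F) (φ := φ) hcx hFc
      (fun y _ => (hφd y).continuousAt.continuousWithinAt)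
      (by
        intro y hy
        have hy' : y ∈ Icc c x := Ioo_subset_Icc_self hy
        refine ⟨_, _, hFd y hy', hφd y, ?_⟩
        have h0 : c - y ≤ 0 := by linarith [hy.1]
        have h0' : (c - y) ^ 3 / 6 ≤ 0 := by
          have : (c - y) ^ 3 ≤ 0 := Odd.pow_nonpos ⟨1, by norm_num⟩ h0
          linarith
        rw [abs_neg, abs_mul, abs_of_nonpos h0']
        calc -((c - y) ^ 3 / 6) * |f4 y| ≤ -((c - y) ^ 3 / 6) * C :=
              mul_le_mul_of_nonneg_left (hC y hy') (by linarith)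
          _ = -(C * (c - y) ^ 3 / 6) := by ring)
    have hFc0 : F c = 0 := by simp [hF]
    rw [hFc0, sub_zero] at key
    simp only [hF, hφ] at key ⊢
    calc |f c - f x - (c - x) * f1 x - (c - x) ^ 2 / 2 * f2 x - (c - x) ^ 3 / 6 * f3 x|
        ≤ C * (c - x) ^ 4 / 24 - C * (c - c) ^ 4 / 24 := key
      _ = C * (c - x) ^ 4 / 24 := by ring


/-- Local truncation error of the implicit finite differences scheme (FD₂) for the heat
equation: if `u` solves `∂u/∂t = ∂²u/∂x²` on `I × [0,T]`, is `C²` in time with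
`m₂ ≤ ∂²u/∂t² ≤ M₂` and `C⁴` in space with `|∂⁴u/∂x⁴| ≤ M₄`, then for all `h, k > 0`,
`x` with `[x-h, x+h] ⊆ I` and `t` with `t + k ≤ T`,
`|(u(x,t+k)-u(x,t))/k - (1/(2h²))·[δ²u(·,t+k) + δ²u(·,t)](x)| ≤ (k/8)(M₂-m₂) + (h²/12)M₄`,
where `δ²v(x) = v(x-h) - 2v(x) + v(x+h)`. -/
theorem heat_FD2_truncation_error
    (I : Set ℝ) (hI : IsOpen I) (T : ℝ) (hT : 0 < T)
    (u ut utt ux1 ux2 ux3 ux4 : ℝ → ℝ → ℝ) (m2 M2 M4 : ℝ)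
    -- first and second partial derivatives of `u` in time, on `I × [0,T]`
    (hut : ∀ x ∈ I, ∀ t ∈ Icc 0 T, HasDerivWithinAt (fun s => u x s) (ut x t) (Icc 0 T) t)
    (hutt : ∀ x ∈ I, ∀ t ∈ Icc 0 T, HasDerivWithinAt (fun s => ut x s) (utt x t) (Icc 0 T) t)
    (huttcont : ∀ x ∈ I, ContinuousOn (fun s => utt x s) (Icc 0 T))
    -- partial derivatives of `u` in space up to order four, on `I × [0,T]`
    (hux1 : ∀ x ∈ I, ∀ t ∈ Icc 0 T, HasDerivAt (fun y => u y t) (ux1 x t) x)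
    (hux2 : ∀ x ∈ I, ∀ t ∈ Icc 0 T, HasDerivAt (fun y => ux1 y t) (ux2 x t) x)
    (hux3 : ∀ x ∈ I, ∀ t ∈ Icc 0 T, HasDerivAt (fun y => ux2 y t) (ux3 x t) x)
    (hux4 : ∀ x ∈ I, ∀ t ∈ Icc 0 T, HasDerivAt (fun y => ux3 y t) (ux4 x t) x)
    (hux4cont : ∀ t ∈ Icc (0 : ℝ) T, ContinuousOn (fun y => ux4 y t) I)
    -- the heat equation
    (hheat : ∀ x ∈ I, ∀ t ∈ Icc 0 T, ut x t = ux2 x t)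
    -- bounds on the second time derivative and the fourth space derivative
    (hm2 : ∀ x ∈ I, ∀ t ∈ Icc 0 T, m2 ≤ utt x t)
    (hM2 : ∀ x ∈ I, ∀ t ∈ Icc 0 T, utt x t ≤ M2)
    (hM4 : ∀ x ∈ I, ∀ t ∈ Icc 0 T, |ux4 x t| ≤ M4) :
    ∀ h k : ℝ, 0 < h → 0 < k → ∀ x : ℝ, Icc (x - h) (x + h) ⊆ I →
      ∀ t : ℝ, 0 ≤ t → t + k ≤ T →
        |(u x (t + k) - u x t) / k
            - (1 / (2 * h ^ 2)) *
                ((u (x - h) (t + k) - 2 * u x (t + k) + u (x + h) (t + k))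
                  + (u (x - h) t - 2 * u x t + u (x + h) t))|
          ≤ (k / 8) * (M2 - m2) + (h ^ 2 / 12) * M4 := by
  intro h k hh hk x hx t ht0 htk
  have hxI : x ∈ I := hx ⟨by linarith, by linarith⟩
  have htI : t ∈ Icc (0:ℝ) T := ⟨ht0, by linarith⟩
  have ht1I : t + k ∈ Icc (0:ℝ) T := ⟨by linarith, htk⟩
  -- Space estimate
  have Sbound : ∀ τ ∈ Icc (0:ℝ) T,
      |(u (x - h) τ - 2 * u x τ + u (x + h) τ) - h ^ 2 * ux2 x τ| ≤ M4 * h ^ 4 / 12 := by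
    intro τ hτ
    have hsub1 : uIcc x (x + h) ⊆ I := by
      rw [uIcc_of_le (by linarith)]
      exact fun y hy => hx ⟨by linarith [hy.1], hy.2⟩
    have hsub2 : uIcc x (x - h) ⊆ I := by
      rw [uIcc_of_ge (by linarith)]
      exact fun y hy => hx ⟨hy.1, by linarith [hy.2]⟩
    have E1 := taylor3_bound (f := fun y => u y τ) (f1 := fun y => ux1 y τ)
      (f2 := fun y => ux2 y τ) (f3 := fun y => ux3 y τ) (f4 := fun y => ux4 y τ)
      (x := x) (c := x + h) (C := M4)
      (fun y hy => hux1 y (hsub1 hy) τ hτ) (fun y hy => hux2 y (hsub1 hy) τ hτ)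
      (fun y hy => hux3 y (hsub1 hy) τ hτ) (fun y hy => hux4 y (hsub1 hy) τ hτ)
      (fun y hy => hM4 y (hsub1 hy) τ hτ)
    have E2 := taylor3_bound (f := fun y => u y τ) (f1 := fun y => ux1 y τ)
      (f2 := fun y => ux2 y τ) (f3 := fun y => ux3 y τ) (f4 := fun y => ux4 y τ)
      (x := x) (c := x - h) (C := M4)
      (fun y hy => hux1 y (hsub2 hy) τ hτ) (fun y hy => hux2 y (hsub2 hy) τ hτ)
      (fun y hy => hux3 y (hsub2 hy) τ hτ) (fun y hy => hux4 y (hsub2 hy) τ hτ)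
      (fun y hy => hM4 y (hsub2 hy) τ hτ)
    have eq1 : (u (x - h) τ - 2 * u x τ + u (x + h) τ) - h ^ 2 * ux2 x τ
        = (u (x + h) τ - u x τ - (x + h - x) * ux1 x τ - (x + h - x) ^ 2 / 2 * ux2 x τ
            - (x + h - x) ^ 3 / 6 * ux3 x τ)
          + (u (x - h) τ - u x τ - (x - h - x) * ux1 x τ - (x - h - x) ^ 2 / 2 * ux2 x τ
            - (x - h - x) ^ 3 / 6 * ux3 x τ) := by ring
    have eq2 : M4 * (x + h - x) ^ 4 / 24 + M4 * (x - h - x) ^ 4 / 24 = M4 * h ^ 4 / 12 := by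
      ring
    calc |(u (x - h) τ - 2 * u x τ + u (x + h) τ) - h ^ 2 * ux2 x τ|
        = |(u (x + h) τ - u x τ - (x + h - x) * ux1 x τ - (x + h - x) ^ 2 / 2 * ux2 x τ
            - (x + h - x) ^ 3 / 6 * ux3 x τ)
          + (u (x - h) τ - u x τ - (x - h - x) * ux1 x τ - (x - h - x) ^ 2 / 2 * ux2 x τ
            - (x - h - x) ^ 3 / 6 * ux3 x τ)| := by rw [eq1]
      _ ≤ _ + _ := abs_add_le _ _
      _ ≤ M4 * (x + h - x) ^ 4 / 24 + M4 * (x - h - x) ^ 4 / 24 := add_le_add E1 E2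
      _ = M4 * h ^ 4 / 12 := eq2
  -- Time estimate
  have TE : |(u x (t + k) - u x t) - k / 2 * (ut x t + ut x (t + k))|
      ≤ (M2 - m2) * k ^ 2 / 8 := by
    set c0 : ℝ := (m2 + M2) / 2 with hc0
    have hucont : ContinuousOn (fun s => u x s) (Icc 0 T) :=
      fun s hs => (hut x hxI s hs).continuousWithinAt
    have hutcont : ContinuousOn (fun s => ut x s) (Icc 0 T) :=
      fun s hs => (hutt x hxI s hs).continuousWithinAt
    have hvc : ContinuousOn (fun s => u x s - c0 * s ^ 2 / 2) (Icc 0 T) :=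
      hucont.sub (Continuous.continuousOn ((continuous_const.mul (continuous_pow 2)).div_const 2))
    have hv1c : ContinuousOn (fun s => ut x s - c0 * s) (Icc 0 T) :=
      hutcont.sub (Continuous.continuousOn (continuous_const.mul continuous_id))
    have hvd : ∀ y ∈ Ioo t (t + k),
        HasDerivAt (fun s => u x s - c0 * s ^ 2 / 2) (ut x y - c0 * y) y := by
      intro y hy
      have hyI : y ∈ Icc (0:ℝ) T := ⟨by linarith [hy.1], by linarith [hy.2]⟩
      have hnhds : Icc (0:ℝ) T ∈ nhds y :=
        Icc_mem_nhds (by linarith [hy.1]) (by linarith [hy.2])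
      have h1 : HasDerivAt (fun s => u x s) (ut x y) y :=
        (hut x hxI y hyI).hasDerivAt hnhds
      have h2 : HasDerivAt (fun s : ℝ => c0 * s ^ 2 / 2) (c0 * y) y := by
        have := ((hasDerivAt_pow 2 y).const_mul c0).div_const 2
        refine this.congr_deriv ?_
        ring
      exact h1.sub h2
    have hv1d : ∀ y ∈ Ioo t (t + k),
        HasDerivAt (fun s => ut x s - c0 * s) (utt x y - c0) y := by
      intro y hy
      have hyI : y ∈ Icc (0:ℝ) T := ⟨by linarith [hy.1], by linarith [hy.2]⟩
      have hnhds : Icc (0:ℝ) T ∈ nhds y :=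
        Icc_mem_nhds (by linarith [hy.1]) (by linarith [hy.2])
      have h1 : HasDerivAt (fun s => ut x s) (utt x y) y :=
        (hutt x hxI y hyI).hasDerivAt hnhds
      have h2 : HasDerivAt (fun s : ℝ => c0 * s) c0 y := by
        simpa using (hasDerivAt_id y).const_mul c0
      exact h1.sub h2
    have hv2b : ∀ y ∈ Ioo t (t + k), |utt x y - c0| ≤ (M2 - m2) / 2 := by
      intro y hy
      have hyI : y ∈ Icc (0:ℝ) T := ⟨by linarith [hy.1], by linarith [hy.2]⟩
      have := hm2 x hxI y hyI
      have := hM2 x hxI y hyI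
      rw [abs_le]
      constructor <;> simp only [hc0] <;> linarith
    -- first application: from t to t + k/2
    have hIoo1 : Ioo (min t (t + k / 2)) (max t (t + k / 2)) ⊆ Ioo t (t + k) := by
      rw [min_eq_left (by linarith), max_eq_right (by linarith)]
      exact Ioo_subset_Ioo (le_refl _) (by linarith)
    have hIcc1 : uIcc t (t + k / 2) ⊆ Icc (0:ℝ) T := by
      rw [uIcc_of_le (by linarith)]
      exact Icc_subset_Icc (by linarith) (by linarith)
    have T1 := taylor1_bound (f := fun s => u x s - c0 * s ^ 2 / 2)
      (f1 := fun s => ut x s - c0 * s) (f2 := fun s => utt x s - c0)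
      (x := t) (c := t + k / 2) (C := (M2 - m2) / 2)
      (hvc.mono hIcc1) (hv1c.mono hIcc1)
      (fun y hy => hvd y (hIoo1 hy)) (fun y hy => hv1d y (hIoo1 hy))
      (fun y hy => hv2b y (hIoo1 hy))
    -- second application: from t + k to t + k/2
    have hIoo2 : Ioo (min (t + k) (t + k / 2)) (max (t + k) (t + k / 2)) ⊆ Ioo t (t + k) := by
      rw [min_eq_right (by linarith), max_eq_left (by linarith)]
      exact Ioo_subset_Ioo (by linarith) (le_refl _)
    have hIcc2 : uIcc (t + k) (t + k / 2) ⊆ Icc (0:ℝ) T := by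
      rw [uIcc_of_ge (by linarith)]
      exact Icc_subset_Icc (by linarith) (by linarith)
    have T2 := taylor1_bound (f := fun s => u x s - c0 * s ^ 2 / 2)
      (f1 := fun s => ut x s - c0 * s) (f2 := fun s => utt x s - c0)
      (x := t + k) (c := t + k / 2) (C := (M2 - m2) / 2)
      (hvc.mono hIcc2) (hv1c.mono hIcc2)
      (fun y hy => hvd y (hIoo2 hy)) (fun y hy => hv1d y (hIoo2 hy))
      (fun y hy => hv2b y (hIoo2 hy))
    have eq3 : (u x (t + k) - u x t) - k / 2 * (ut x t + ut x (t + k))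
        = ((u x (t + k / 2) - c0 * (t + k / 2) ^ 2 / 2)
            - (u x t - c0 * t ^ 2 / 2)
            - (t + k / 2 - t) * (ut x t - c0 * t))
          - ((u x (t + k / 2) - c0 * (t + k / 2) ^ 2 / 2)
            - (u x (t + k) - c0 * (t + k) ^ 2 / 2)
            - (t + k / 2 - (t + k)) * (ut x (t + k) - c0 * (t + k))) := by ring
    have eq4 : (M2 - m2) / 2 * (t + k / 2 - t) ^ 2 / 2
        + (M2 - m2) / 2 * (t + k / 2 - (t + k)) ^ 2 / 2 = (M2 - m2) * k ^ 2 / 8 := by ring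
    calc |(u x (t + k) - u x t) - k / 2 * (ut x t + ut x (t + k))|
        = |_ - _| := by rw [eq3]
      _ ≤ |_| + |_| := abs_sub _ _
      _ ≤ (M2 - m2) / 2 * (t + k / 2 - t) ^ 2 / 2
            + (M2 - m2) / 2 * (t + k / 2 - (t + k)) ^ 2 / 2 := add_le_add T1 T2
      _ = (M2 - m2) * k ^ 2 / 8 := eq4
  -- Combine
  have hk0 : (k:ℝ) ≠ 0 := ne_of_gt hk
  have hh2 : (0:ℝ) < 2 * h ^ 2 := by positivity
  have e1 : ut x t = ux2 x t := hheat x hxI t htI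
  have e2 : ut x (t + k) = ux2 x (t + k) := hheat x hxI (t + k) ht1I
  have SB1 := Sbound (t + k) ht1I
  have SB0 := Sbound t htI
  set A : ℝ := ((u x (t + k) - u x t) - k / 2 * (ut x t + ut x (t + k))) / k with hA
  set B : ℝ := (h ^ 2 * ux2 x (t + k)
      - (u (x - h) (t + k) - 2 * u x (t + k) + u (x + h) (t + k))) / (2 * h ^ 2) with hB
  set C : ℝ := (h ^ 2 * ux2 x t - (u (x - h) t - 2 * u x t + u (x + h) t)) / (2 * h ^ 2)
    with hC
  have key : (u x (t + k) - u x t) / k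
      - (1 / (2 * h ^ 2)) *
          ((u (x - h) (t + k) - 2 * u x (t + k) + u (x + h) (t + k))
            + (u (x - h) t - 2 * u x t + u (x + h) t)) = A + B + C := by
    rw [hA, hB, hC, e1, e2]
    field_simp
    ring
  rw [key]
  have bA : |A| ≤ k / 8 * (M2 - m2) := by
    rw [hA, abs_div, abs_of_pos hk, div_le_iff₀ hk]
    calc |(u x (t + k) - u x t) - k / 2 * (ut x t + ut x (t + k))|
        ≤ (M2 - m2) * k ^ 2 / 8 := TE
      _ = k / 8 * (M2 - m2) * k := by ring
  have bB : |B| ≤ h ^ 2 / 24 * M4 := by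
    rw [hB, abs_div, abs_of_pos hh2, div_le_iff₀ hh2]
    rw [abs_sub_comm]
    calc |(u (x - h) (t + k) - 2 * u x (t + k) + u (x + h) (t + k)) - h ^ 2 * ux2 x (t + k)|
        ≤ M4 * h ^ 4 / 12 := SB1
      _ = h ^ 2 / 24 * M4 * (2 * h ^ 2) := by ring
  have bC : |C| ≤ h ^ 2 / 24 * M4 := by
    rw [hC, abs_div, abs_of_pos hh2, div_le_iff₀ hh2]
    rw [abs_sub_comm]
    calc |(u (x - h) t - 2 * u x t + u (x + h) t) - h ^ 2 * ux2 x t|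
        ≤ M4 * h ^ 4 / 12 := SB0
      _ = h ^ 2 / 24 * M4 * (2 * h ^ 2) := by ring
  calc |A + B + C| ≤ |A| + |B| + |C| := abs_add_three A B C
    _ ≤ k / 8 * (M2 - m2) + h ^ 2 / 24 * M4 + h ^ 2 / 24 * M4 := by
        exact add_le_add (add_le_add bA bB) bC
    _ = k / 8 * (M2 - m2) + h ^ 2 / 12 * M4 := by ring
end
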